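/- arXiv:0903.3685 — 5 statements merged into one kernel-verified Lean document; each statement's English description precedes it below -/
import Mathlib

section
/- In the triangular lattice Δ there exists a proper perfect dominating set, and any two proper perfect dominating sets of Δ are equivalent up to symmetry: for any proper perfect dominating sets S and S' of Δ there is a graph automorphism φ of Δ with φ(S) = S'. (Up to symmetry, Δ has exactly one proper perfect dominating set.) -/
open SimpleGraph Set

def triDirs : Set (ℤ × ℤ) := {(1,0), (-1,0), (0,1), (0,-1), (1,-1), (-1,1)}

def triLattice : SimpleGraph (ℤ × ℤ) :=
  SimpleGraph.fromRel (fun u v => u - v ∈ triDirs)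

def torLattice (m n : ℕ) : SimpleGraph (ZMod m × ZMod n) :=
  SimpleGraph.fromRel (fun u v =>
    ∃ d ∈ triDirs, u - v = ((d.1 : ZMod m), (d.2 : ZMod n)))

def IsPDS {V : Type*} (G : SimpleGraph V) (S : Set V) : Prop :=
  ∀ v ∉ S, ∃! u, u ∈ S ∧ G.Adj v u

def IsSPDS {V : Type*} (G : SimpleGraph V) (S : Set V) : Prop :=
  ∀ v ∉ S, {u | u ∈ S ∧ G.Adj v u}.ncard = 2

def IsQPDS {V : Type*} (G : SimpleGraph V) (S : Set V) : Prop :=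
  ∀ v ∉ S, {u | u ∈ S ∧ G.Adj v u}.ncard = 1 ∨ {u | u ∈ S ∧ G.Adj v u}.ncard = 2

def IsK2QPDS {V : Type*} (G : SimpleGraph V) (S : Set V) : Prop :=
  IsQPDS G S ∧ ∀ v ∈ S, {u | u ∈ S ∧ G.Adj v u}.ncard = 1

def IsK3QPDS {V : Type*} (G : SimpleGraph V) (S : Set V) : Prop :=
  IsQPDS G S ∧ ∀ v ∈ S, ∃ a b, a ≠ b ∧ G.Adj a b ∧ {u | u ∈ S ∧ G.Adj v u} = {a, b}

def IsIndep {V : Type*} (G : SimpleGraph V) (S : Set V) : Prop :=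
  ∀ a ∈ S, ∀ b ∈ S, ¬ G.Adj a b

set_option linter.unreachableTactic false
set_option linter.unusedTactic false
set_option maxHeartbeats 1000000

def Dp (a b : ℤ) : Prop :=
  (a = 1 ∧ b = 0) ∨ (a = -1 ∧ b = 0) ∨ (a = 0 ∧ b = 1) ∨ (a = 0 ∧ b = -1) ∨
  (a = 1 ∧ b = -1) ∨ (a = -1 ∧ b = 1)

lemma adj' {x y x' y' : ℤ} : triLattice.Adj (x, y) (x', y') ↔ Dp (x - x') (y - y') := by
  unfold triLattice Dp triDirs
  rw [SimpleGraph.fromRel_adj]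
  simp only [ne_eq, Prod.mk.injEq, Prod.mk_sub_mk, Set.mem_insert_iff, Set.mem_singleton_iff,
    not_and]
  omega

lemma memS {S : Set (ℤ × ℤ)} {x y x' y' : ℤ} (h : (x, y) ∈ S) (hx : x' = x) (hy : y' = y) :
    (x', y') ∈ S := by rw [hx, hy]; exact h

lemma sep_of {V : Type*} {G : SimpleGraph V} {S : Set V} (hS : IsPDS G S) (hind : IsIndep G S) :
    ∀ a b c : V, a ∈ S → b ∈ S → a ≠ b → G.Adj c a → G.Adj c b → False := by
  intro a b c ha hb hne hca hcb
  have hc : c ∉ S := fun hc => hind c hc a ha hca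
  obtain ⟨u, -, uniq⟩ := hS c hc
  exact hne ((uniq a ⟨ha, hca⟩).trans (uniq b ⟨hb, hcb⟩).symm)

lemma Apex' {S : Set (ℤ × ℤ)} (hS : IsPDS triLattice S) {x y a b : ℤ} (hd : Dp a b)
    (h0 : (x, y) ∈ S) (h1 : (x + a, y + b) ∈ S) : (x + -b, y + (a + b)) ∈ S := by
  by_contra hc
  obtain ⟨u, -, uniq⟩ := hS _ hc
  have e1 : ((x : ℤ), y) = u := uniq _ ⟨h0, by rw [adj']; unfold Dp at hd ⊢; omega⟩
  have e2 : ((x + a : ℤ), y + b) = u := uniq _ ⟨h1, by rw [adj']; unfold Dp at hd ⊢; omega⟩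
  rw [← e2] at e1
  rw [Prod.mk.injEq] at e1
  unfold Dp at hd; omega

lemma rotD {a b : ℤ} (h : Dp a b) : Dp (-b) (a + b) := by unfold Dp at *; omega

lemma dirAll {S : Set (ℤ × ℤ)} (hS : IsPDS triLattice S) {x y a b c d : ℤ} (hd : Dp a b)
    (ht : Dp c d) (h0 : (x, y) ∈ S) (h1 : (x + a, y + b) ∈ S) : (x + c, y + d) ∈ S := by
  have m1 := Apex' hS hd h0 h1
  have m2 := Apex' hS (rotD hd) h0 m1
  have m3 := Apex' hS (rotD (rotD hd)) h0 m2
  have m4 := Apex' hS (rotD (rotD (rotD hd))) h0 m3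
  have m5 := Apex' hS (rotD (rotD (rotD (rotD hd)))) h0 m4
  unfold Dp at hd ht
  rcases hd with ⟨rfl, rfl⟩ | ⟨rfl, rfl⟩ | ⟨rfl, rfl⟩ | ⟨rfl, rfl⟩ | ⟨rfl, rfl⟩ | ⟨rfl, rfl⟩ <;>
  rcases ht with ⟨rfl, rfl⟩ | ⟨rfl, rfl⟩ | ⟨rfl, rfl⟩ | ⟨rfl, rfl⟩ | ⟨rfl, rfl⟩ | ⟨rfl, rfl⟩ <;>
  all_goals first
    | (norm_num at h1 m1 m2 m3 m4 m5 ⊢; assumption)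
    | (norm_num at h1 m1 m2 m3 m4 m5; assumption)
    | assumption


def taut (c1 c2 : ℤ) : triLattice ≃g triLattice :=
  ⟨⟨fun z => (z.1 + c1, z.2 + c2), fun z => (z.1 - c1, z.2 - c2),
    fun z => by apply Prod.ext <;> simp,
    fun z => by apply Prod.ext <;> simp⟩, by
      intro a b
      obtain ⟨a1, a2⟩ := a; obtain ⟨b1, b2⟩ := b
      show triLattice.Adj (a1 + c1, a2 + c2) (b1 + c1, b2 + c2) ↔ _
      rw [adj', adj']; unfold Dp; omega⟩

def rho : triLattice ≃g triLattice :=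
  ⟨⟨fun z => (-z.2, z.1 + z.2), fun z => (z.1 + z.2, -z.1),
    fun z => by apply Prod.ext <;> simp,
    fun z => by apply Prod.ext <;> simp⟩, by
      intro a b
      obtain ⟨a1, a2⟩ := a; obtain ⟨b1, b2⟩ := b
      show triLattice.Adj (-a2, a1 + a2) (-b2, b1 + b2) ↔ _
      rw [adj', adj']; unfold Dp; omega⟩

def mir : triLattice ≃g triLattice :=
  ⟨⟨fun z => (z.1 + z.2, -z.2), fun z => (z.1 + z.2, -z.2),
    fun z => by apply Prod.ext <;> simp,
    fun z => by apply Prod.ext <;> simp⟩, by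
      intro a b
      obtain ⟨a1, a2⟩ := a; obtain ⟨b1, b2⟩ := b
      show triLattice.Adj (a1 + a2, -a2) (b1 + b2, -b2) ↔ _
      rw [adj', adj']; unfold Dp; omega⟩

lemma taut_apply (c1 c2 p q : ℤ) : taut c1 c2 (p, q) = (p + c1, q + c2) := rfl
lemma rho_apply (p q : ℤ) : rho (p, q) = (-q, p + q) := rfl
lemma mir_apply (p q : ℤ) : mir (p, q) = (p + q, -q) := rfl

lemma isPDS_comap (φ : triLattice ≃g triLattice) {S : Set (ℤ × ℤ)} (hS : IsPDS triLattice S) :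
    IsPDS triLattice (⇑φ ⁻¹' S) := by
  intro v hv
  obtain ⟨u, ⟨huS, hadj⟩, uniq⟩ := hS (φ v) hv
  refine ⟨φ.symm u, ⟨?_, ?_⟩, ?_⟩
  · show φ (φ.symm u) ∈ S
    rw [RelIso.apply_symm_apply]; exact huS
  · exact φ.map_rel_iff.mp (by rw [RelIso.apply_symm_apply]; exact hadj)
  · intro w ⟨hwS, hw⟩
    have : φ w = u := uniq (φ w) ⟨hwS, φ.map_rel_iff.mpr hw⟩
    rw [← this, RelIso.symm_apply_apply]

lemma isIndep_comap (φ : triLattice ≃g triLattice) {S : Set (ℤ × ℤ)}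
    (hind : IsIndep triLattice S) : IsIndep triLattice (⇑φ ⁻¹' S) :=
  fun a ha b hb hadj => hind (φ a) ha (φ b) hb (φ.map_rel_iff.mpr hadj)

def RProp (a b : ℤ) : Prop :=
  ∀ S : Set (ℤ × ℤ), IsPDS triLattice S → IsIndep triLattice S →
    ∀ x y : ℤ, (x, y) ∈ S → (x + a, y + b) ∈ S → (x + -b, y + (a + b)) ∈ S

lemma Rbase : RProp 2 1 := by
  intro S hS hind x y h0 h1
  have hsep := sep_of hS hind
  have hw : ((x, y + 2) : ℤ × ℤ) ∉ S := fun hw =>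
    hsep (x, y) (x, y + 2) (x, y + 1) h0 hw
      (by simp only [ne_eq, Prod.mk.injEq, not_and]; omega)
      (by rw [adj']; unfold Dp; omega) (by rw [adj']; unfold Dp; omega)
  obtain ⟨⟨u1, u2⟩, ⟨huS, hadj⟩, -⟩ := hS _ hw
  rw [adj'] at hadj
  unfold Dp at hadj
  rcases hadj with ⟨e1, e2⟩ | ⟨e1, e2⟩ | ⟨e1, e2⟩ | ⟨e1, e2⟩ | ⟨e1, e2⟩ | ⟨e1, e2⟩
  · -- u = (x-1, y+2)
    exact absurd huS (fun hu => hsep (x, y) (u1, u2) (x, y + 1) h0 hu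
      (by simp only [ne_eq, Prod.mk.injEq, not_and]; omega)
      (by rw [adj']; unfold Dp; omega) (by rw [adj']; unfold Dp; omega))
  · -- u = (x+1, y+2) adjacent to (x+2,y+1)
    exact absurd (by rw [adj']; unfold Dp; omega : triLattice.Adj (u1, u2) (x + 2, y + 1))
      (hind (u1, u2) huS (x + 2, y + 1) h1)
  · -- u = (x, y+1) adjacent to (x,y)
    exact absurd (by rw [adj']; unfold Dp; omega : triLattice.Adj (u1, u2) (x, y))
      (hind (u1, u2) huS (x, y) h0)
  · -- u = (x, y+3)
    exact absurd huS (fun hu => hsep (x + 2, y + 1) (u1, u2) (x + 1, y + 2) h1 hu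
      (by simp only [ne_eq, Prod.mk.injEq, not_and]; omega)
      (by rw [adj']; unfold Dp; omega) (by rw [adj']; unfold Dp; omega))
  · -- u = (x-1, y+3): conclusion
    exact memS huS (by omega) (by omega)
  · -- u = (x+1, y+1) adjacent to (x+2,y+1)
    exact absurd (by rw [adj']; unfold Dp; omega : triLattice.Adj (u1, u2) (x + 2, y + 1))
      (hind (u1, u2) huS (x + 2, y + 1) h1)

lemma Rstep {a b : ℤ} (h : RProp a b) : RProp (-b) (a + b) := by
  intro S hS hind x y h0 h1
  have h0' : ((x + y, -x) : ℤ × ℤ) ∈ ⇑rho ⁻¹' S := by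
    show rho (x + y, -x) ∈ S
    rw [rho_apply]
    exact memS h0 (by ring) (by ring)
  have h1' : ((x + y + a, -x + b) : ℤ × ℤ) ∈ ⇑rho ⁻¹' S := by
    show rho (x + y + a, -x + b) ∈ S
    rw [rho_apply]
    exact memS h1 (by ring) (by ring)
  have res := h _ (isPDS_comap rho hS) (isIndep_comap rho hind) (x + y) (-x) h0'
    (memS h1' (by ring) (by ring))
  have res' : rho (x + y + -b, -x + (a + b)) ∈ S := res
  rw [rho_apply] at res'
  exact memS res' (by ring) (by ring)

lemma R1 : RProp (-1) 3 := by have h := Rstep Rbase; norm_num at h; exact h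
lemma R2 : RProp (-3) 2 := by have h := Rstep R1; norm_num at h; exact h
lemma R3 : RProp (-2) (-1) := by have h := Rstep R2; norm_num at h; exact h
lemma R4 : RProp 1 (-3) := by have h := Rstep R3; norm_num at h; exact h
lemma R5 : RProp 3 (-2) := by have h := Rstep R4; norm_num at h; exact h


def Shell (a b : ℤ) : Prop :=
  (a = 2 ∧ b = 1) ∨ (a = -1 ∧ b = 3) ∨ (a = -3 ∧ b = 2) ∨ (a = -2 ∧ b = -1) ∨
  (a = 1 ∧ b = -3) ∨ (a = 3 ∧ b = -2)

lemma rotShell {a b : ℤ} (h : Shell a b) : Shell (-b) (a + b) := by unfold Shell at *; omega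

lemma Rall {S : Set (ℤ × ℤ)} (hS : IsPDS triLattice S) (hind : IsIndep triLattice S)
    {x y a b : ℤ} (hsh : Shell a b) (h0 : (x, y) ∈ S) (h1 : (x + a, y + b) ∈ S) :
    (x + -b, y + (a + b)) ∈ S := by
  unfold Shell at hsh
  rcases hsh with ⟨rfl, rfl⟩ | ⟨rfl, rfl⟩ | ⟨rfl, rfl⟩ | ⟨rfl, rfl⟩ | ⟨rfl, rfl⟩ | ⟨rfl, rfl⟩
  · exact memS (Rbase S hS hind x y h0 h1) (by norm_num) (by norm_num)
  · exact memS (R1 S hS hind x y h0 h1) (by norm_num) (by norm_num)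
  · exact memS (R2 S hS hind x y h0 h1) (by norm_num) (by norm_num)
  · exact memS (R3 S hS hind x y h0 h1) (by norm_num) (by norm_num)
  · exact memS (R4 S hS hind x y h0 h1) (by norm_num) (by norm_num)
  · exact memS (R5 S hS hind x y h0 h1) (by norm_num) (by norm_num)

lemma shellAll {S : Set (ℤ × ℤ)} (hS : IsPDS triLattice S) (hind : IsIndep triLattice S)
    {x y a b c d : ℤ} (hsh : Shell a b) (ht : Shell c d)
    (h0 : (x, y) ∈ S) (h1 : (x + a, y + b) ∈ S) : (x + c, y + d) ∈ S := by
  have m1 := Rall hS hind hsh h0 h1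
  have m2 := Rall hS hind (rotShell hsh) h0 m1
  have m3 := Rall hS hind (rotShell (rotShell hsh)) h0 m2
  have m4 := Rall hS hind (rotShell (rotShell (rotShell hsh))) h0 m3
  have m5 := Rall hS hind (rotShell (rotShell (rotShell (rotShell hsh)))) h0 m4
  unfold Shell at hsh ht
  rcases hsh with ⟨rfl, rfl⟩ | ⟨rfl, rfl⟩ | ⟨rfl, rfl⟩ | ⟨rfl, rfl⟩ | ⟨rfl, rfl⟩ | ⟨rfl, rfl⟩ <;>
  rcases ht with ⟨rfl, rfl⟩ | ⟨rfl, rfl⟩ | ⟨rfl, rfl⟩ | ⟨rfl, rfl⟩ | ⟨rfl, rfl⟩ | ⟨rfl, rfl⟩ <;>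
  all_goals first
    | (norm_num at h1 m1 m2 m3 m4 m5 ⊢; assumption)
    | (norm_num at h1 m1 m2 m3 m4 m5; assumption)
    | assumption


def uniF (S : Set (ℤ × ℤ)) (x y i j : ℤ) : Prop :=
  (x + i, y + j) ∈ S ∧ (x + i + 1, y + j) ∈ S

lemma uniF_R {S : Set (ℤ × ℤ)} (hS : IsPDS triLattice S) {x y i j : ℤ}
    (h : uniF S x y i j) : uniF S x y (i + 1) j := by
  obtain ⟨h1, h2⟩ := h
  refine ⟨memS h2 (by ring) (by ring), ?_⟩
  have := dirAll hS (show Dp (-1) 0 by unfold Dp; omega) (show Dp 1 0 by unfold Dp; omega)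
    h2 (memS h1 (by ring) (by ring))
  exact memS this (by ring) (by ring)

lemma uniF_L {S : Set (ℤ × ℤ)} (hS : IsPDS triLattice S) {x y i j : ℤ}
    (h : uniF S x y i j) : uniF S x y (i - 1) j := by
  obtain ⟨h1, h2⟩ := h
  refine ⟨?_, memS h1 (by ring) (by ring)⟩
  have := dirAll hS (show Dp 1 0 by unfold Dp; omega) (show Dp (-1) 0 by unfold Dp; omega)
    h1 (memS h2 (by ring) (by ring))
  exact memS this (by ring) (by ring)

lemma uniF_U {S : Set (ℤ × ℤ)} (hS : IsPDS triLattice S) {x y i j : ℤ}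
    (h : uniF S x y i j) : uniF S x y i (j + 1) := by
  obtain ⟨h1, h2⟩ := h
  constructor
  · have := dirAll hS (show Dp 1 0 by unfold Dp; omega) (show Dp 0 1 by unfold Dp; omega)
      h1 (memS h2 (by ring) (by ring))
    exact memS this (by ring) (by ring)
  · have := dirAll hS (show Dp (-1) 0 by unfold Dp; omega) (show Dp 0 1 by unfold Dp; omega)
      h2 (memS h1 (by ring) (by ring))
    exact memS this (by ring) (by ring)

lemma uniF_D {S : Set (ℤ × ℤ)} (hS : IsPDS triLattice S) {x y i j : ℤ}
    (h : uniF S x y i j) : uniF S x y i (j - 1) := by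
  obtain ⟨h1, h2⟩ := h
  constructor
  · have := dirAll hS (show Dp 1 0 by unfold Dp; omega) (show Dp 0 (-1) by unfold Dp; omega)
      h1 (memS h2 (by ring) (by ring))
    exact memS this (by ring) (by ring)
  · have := dirAll hS (show Dp (-1) 0 by unfold Dp; omega) (show Dp 0 (-1) by unfold Dp; omega)
      h2 (memS h1 (by ring) (by ring))
    exact memS this (by ring) (by ring)

lemma indep_of {S : Set (ℤ × ℤ)} (hS : IsPDS triLattice S) (hne : S ≠ Set.univ) :
    IsIndep triLattice S := by
  by_contra hcon
  unfold IsIndep at hcon; push_neg at hcon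
  obtain ⟨⟨x, y⟩, hxy, ⟨b1, b2⟩, hb, hadj⟩ := hcon
  rw [adj'] at hadj
  apply hne
  rw [Set.eq_univ_iff_forall]
  have hd : Dp (b1 - x) (b2 - y) := by unfold Dp at hadj ⊢; omega
  have h1 : (x + (b1 - x), y + (b2 - y)) ∈ S := memS hb (by ring) (by ring)
  have h10 : (x + 1, y + 0) ∈ S := dirAll hS hd (by unfold Dp; omega) hxy h1
  have base : uniF S x y 0 0 := ⟨memS hxy (by ring) (by ring), memS h10 (by ring) (by ring)⟩
  have row : ∀ i : ℤ, uniF S x y i 0 := fun i =>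
    Int.induction_on i base (fun _ hk => uniF_R hS hk) (fun _ hk => uniF_L hS hk)
  have allm : ∀ i j : ℤ, uniF S x y i j := fun i j =>
    Int.induction_on j (row i) (fun _ hk => uniF_U hS hk) (fun _ hk => uniF_D hS hk)
  rintro ⟨q1, q2⟩
  exact memS (allm (q1 - x) (q2 - y)).1 (by ring) (by ring)

lemma chir {S : Set (ℤ × ℤ)} (hS : IsPDS triLattice S) (hind : IsIndep triLattice S)
    {x y : ℤ} (h0 : (x, y) ∈ S) : (x + 2, y + 1) ∈ S ∨ (x + 3, y - 1) ∈ S := by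
  have hsep := sep_of hS hind
  have hw : ((x + 2, y) : ℤ × ℤ) ∉ S := fun hw =>
    hsep (x, y) (x + 2, y) (x + 1, y) h0 hw
      (by simp only [ne_eq, Prod.mk.injEq, not_and]; omega)
      (by rw [adj']; unfold Dp; omega) (by rw [adj']; unfold Dp; omega)
  obtain ⟨⟨u1, u2⟩, ⟨huS, hadj⟩, -⟩ := hS _ hw
  rw [adj'] at hadj
  unfold Dp at hadj
  rcases hadj with ⟨e1, e2⟩ | ⟨e1, e2⟩ | ⟨e1, e2⟩ | ⟨e1, e2⟩ | ⟨e1, e2⟩ | ⟨e1, e2⟩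
  · -- u = (x+1, y): adjacent to (x,y)
    exact absurd (by rw [adj']; unfold Dp; omega : triLattice.Adj (u1, u2) (x, y))
      (hind (u1, u2) huS (x, y) h0)
  · -- u = (x+3, y): impossible, look at (x+1, y+1)
    exfalso
    have hv : ((x + 1, y + 1) : ℤ × ℤ) ∉ S := fun hv =>
      hsep (x, y) (x + 1, y + 1) (x + 1, y) h0 hv
        (by simp only [ne_eq, Prod.mk.injEq, not_and]; omega)
        (by rw [adj']; unfold Dp; omega) (by rw [adj']; unfold Dp; omega)
    obtain ⟨⟨w1, w2⟩, ⟨hwS, hwadj⟩, -⟩ := hS _ hv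
    rw [adj'] at hwadj
    unfold Dp at hwadj
    rcases hwadj with ⟨f1, f2⟩ | ⟨f1, f2⟩ | ⟨f1, f2⟩ | ⟨f1, f2⟩ | ⟨f1, f2⟩ | ⟨f1, f2⟩
    · -- w = (x, y+1): adjacent to (x,y)
      exact absurd (by rw [adj']; unfold Dp; omega : triLattice.Adj (w1, w2) (x, y))
        (hind (w1, w2) hwS (x, y) h0)
    · -- w = (x+2, y+1): adjacent to u = (x+3,y)
      exact absurd (by rw [adj']; unfold Dp; omega : triLattice.Adj (w1, w2) (u1, u2))
        (hind (w1, w2) hwS (u1, u2) huS)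
    · -- w = (x+1, y): adjacent to (x,y)
      exact absurd (by rw [adj']; unfold Dp; omega : triLattice.Adj (w1, w2) (x, y))
        (hind (w1, w2) hwS (x, y) h0)
    · -- w = (x+1, y+2): common neighbour (x+2,y+1) with u = (x+3,y)
      exact hsep (u1, u2) (w1, w2) (x + 2, y + 1) huS hwS
        (by simp only [ne_eq, Prod.mk.injEq, not_and]; omega)
        (by rw [adj']; unfold Dp; omega) (by rw [adj']; unfold Dp; omega)
    · -- w = (x, y+2): common neighbour (x,y+1) with (x,y)
      exact hsep (x, y) (w1, w2) (x, y + 1) h0 hwS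
        (by simp only [ne_eq, Prod.mk.injEq, not_and]; omega)
        (by rw [adj']; unfold Dp; omega) (by rw [adj']; unfold Dp; omega)
    · -- w = (x+2, y): adjacent to u = (x+3,y)
      exact absurd (by rw [adj']; unfold Dp; omega : triLattice.Adj (w1, w2) (u1, u2))
        (hind (w1, w2) hwS (u1, u2) huS)
  · -- u = (x+2, y-1): common neighbour (x+1,y) with (x,y)
    exact absurd huS (fun hu => hsep (x, y) (u1, u2) (x + 1, y) h0 hu
      (by simp only [ne_eq, Prod.mk.injEq, not_and]; omega)
      (by rw [adj']; unfold Dp; omega) (by rw [adj']; unfold Dp; omega))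
  · -- u = (x+2, y+1): left disjunct
    exact Or.inl (memS huS (by omega) (by omega))
  · -- u = (x+1, y+1): common neighbour (x+1,y) with (x,y)
    exact absurd huS (fun hu => hsep (x, y) (u1, u2) (x + 1, y) h0 hu
      (by simp only [ne_eq, Prod.mk.injEq, not_and]; omega)
      (by rw [adj']; unfold Dp; omega) (by rw [adj']; unfold Dp; omega))
  · -- u = (x+3, y-1): right disjunct
    exact Or.inr (memS huS (by omega) (by omega))


def pdsSet : Set (ℤ × ℤ) := {p | (7 : ℤ) ∣ 3 * p.1 + p.2}

def covF (S : Set (ℤ × ℤ)) (x y k l : ℤ) : Prop :=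
  (x + (2 * k - l), y + (k + 3 * l)) ∈ S ∧ (x + (2 * k - l) + 2, y + (k + 3 * l) + 1) ∈ S

lemma covF_R {S : Set (ℤ × ℤ)} (hS : IsPDS triLattice S) (hind : IsIndep triLattice S)
    {x y k l : ℤ} (h : covF S x y k l) : covF S x y (k + 1) l := by
  obtain ⟨h1, h2⟩ := h
  refine ⟨memS h2 (by ring) (by ring), ?_⟩
  have := shellAll hS hind (show Shell (-2) (-1) by unfold Shell; omega)
    (show Shell 2 1 by unfold Shell; omega) h2 (memS h1 (by ring) (by ring))
  exact memS this (by ring) (by ring)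

lemma covF_L {S : Set (ℤ × ℤ)} (hS : IsPDS triLattice S) (hind : IsIndep triLattice S)
    {x y k l : ℤ} (h : covF S x y k l) : covF S x y (k - 1) l := by
  obtain ⟨h1, h2⟩ := h
  refine ⟨?_, memS h1 (by ring) (by ring)⟩
  have := shellAll hS hind (show Shell 2 1 by unfold Shell; omega)
    (show Shell (-2) (-1) by unfold Shell; omega) h1 (memS h2 (by ring) (by ring))
  exact memS this (by ring) (by ring)

lemma covF_U {S : Set (ℤ × ℤ)} (hS : IsPDS triLattice S) (hind : IsIndep triLattice S)
    {x y k l : ℤ} (h : covF S x y k l) : covF S x y k (l + 1) := by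
  obtain ⟨h1, h2⟩ := h
  constructor
  · have := shellAll hS hind (show Shell 2 1 by unfold Shell; omega)
      (show Shell (-1) 3 by unfold Shell; omega) h1 (memS h2 (by ring) (by ring))
    exact memS this (by ring) (by ring)
  · have := shellAll hS hind (show Shell (-2) (-1) by unfold Shell; omega)
      (show Shell (-1) 3 by unfold Shell; omega) h2 (memS h1 (by ring) (by ring))
    exact memS this (by ring) (by ring)

lemma covF_D {S : Set (ℤ × ℤ)} (hS : IsPDS triLattice S) (hind : IsIndep triLattice S)
    {x y k l : ℤ} (h : covF S x y k l) : covF S x y k (l - 1) := by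
  obtain ⟨h1, h2⟩ := h
  constructor
  · have := shellAll hS hind (show Shell 2 1 by unfold Shell; omega)
      (show Shell 1 (-3) by unfold Shell; omega) h1 (memS h2 (by ring) (by ring))
    exact memS this (by ring) (by ring)
  · have := shellAll hS hind (show Shell 2 1 by unfold Shell; omega)
      (show Shell 3 (-2) by unfold Shell; omega) h1 (memS h2 (by ring) (by ring))
    exact memS this (by ring) (by ring)

lemma resid (r : ℤ) (h : ¬ (7:ℤ) ∣ r) : ∃ a b : ℤ, Dp a b ∧ (7:ℤ) ∣ r + 3 * a + b := by
  have hr : r % 7 = 1 ∨ r % 7 = 2 ∨ r % 7 = 3 ∨ r % 7 = 4 ∨ r % 7 = 5 ∨ r % 7 = 6 := by omega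
  rcases hr with h | h | h | h | h | h
  · exact ⟨0, -1, by unfold Dp; omega, by omega⟩
  · exact ⟨-1, 1, by unfold Dp; omega, by omega⟩
  · exact ⟨-1, 0, by unfold Dp; omega, by omega⟩
  · exact ⟨1, 0, by unfold Dp; omega, by omega⟩
  · exact ⟨1, -1, by unfold Dp; omega, by omega⟩
  · exact ⟨0, 1, by unfold Dp; omega, by omega⟩

lemma caseA {S : Set (ℤ × ℤ)} (hS : IsPDS triLattice S) (hind : IsIndep triLattice S)
    {x y : ℤ} (h0 : (x, y) ∈ S) (h21 : (x + 2, y + 1) ∈ S) :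
    ⇑(taut x y) '' pdsSet = S := by
  have base : covF S x y 0 0 := ⟨memS h0 (by ring) (by ring), memS h21 (by ring) (by ring)⟩
  have row : ∀ k : ℤ, covF S x y k 0 := fun k =>
    Int.induction_on k base (fun _ h => covF_R hS hind h) (fun _ h => covF_L hS hind h)
  have cov : ∀ k l : ℤ, covF S x y k l := fun k l =>
    Int.induction_on l (row k) (fun _ h => covF_U hS hind h) (fun _ h => covF_D hS hind h)
  ext ⟨q1, q2⟩
  simp only [Set.mem_image]
  constructor
  · rintro ⟨⟨p1, p2⟩, hp, heq⟩
    have hp' : (7:ℤ) ∣ 3 * p1 + p2 := hp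
    rw [taut_apply, Prod.mk.injEq] at heq
    obtain ⟨hk1, hk2⟩ := heq
    obtain ⟨k, hk⟩ := hp'
    have h2 : (7:ℤ) ∣ 2 * p2 - p1 := by omega
    obtain ⟨l, hl⟩ := h2
    exact memS (cov k l).1 (by omega) (by omega)
  · intro hq
    have hdvd : (7:ℤ) ∣ 3 * (q1 - x) + (q2 - y) := by
      by_contra hnd
      obtain ⟨a, b, hab, hd7⟩ := resid _ hnd
      have h7 : (7:ℤ) ∣ 3 * ((q1 + a) - x) + ((q2 + b) - y) := by omega
      obtain ⟨k, hk⟩ := h7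
      have h2 : (7:ℤ) ∣ 2 * ((q2 + b) - y) - ((q1 + a) - x) := by omega
      obtain ⟨l, hl⟩ := h2
      have hmem : ((q1 + a, q2 + b) : ℤ × ℤ) ∈ S := memS (cov k l).1 (by omega) (by omega)
      exact hind (q1, q2) hq (q1 + a, q2 + b) hmem (by rw [adj']; unfold Dp at hab ⊢; omega)
    exact ⟨(q1 - x, q2 - y), hdvd, by rw [taut_apply, Prod.mk.injEq]; omega⟩


lemma pds_exu (v1 v2 d1 d2 : ℤ) (hd : Dp d1 d2) (hv : ¬ (7:ℤ) ∣ 3 * v1 + v2)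
    (hdom : (7:ℤ) ∣ 3 * (v1 + d1) + (v2 + d2)) :
    ∃! u, u ∈ pdsSet ∧ triLattice.Adj (v1, v2) u := by
  refine ⟨(v1 + d1, v2 + d2), ⟨hdom, by rw [adj']; unfold Dp at hd ⊢; omega⟩, ?_⟩
  rintro ⟨w1, w2⟩ ⟨hw, hadj⟩
  rw [adj'] at hadj
  unfold Dp at hadj hd
  have hw' : (7:ℤ) ∣ 3 * w1 + w2 := hw
  simp only [Prod.mk.injEq]
  omega

lemma pdsSet_isPDS : IsPDS triLattice pdsSet := by
  rintro ⟨v1, v2⟩ hv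
  have hv' : ¬ (7:ℤ) ∣ 3 * v1 + v2 := hv
  have hr : (3 * v1 + v2) % 7 = 1 ∨ (3 * v1 + v2) % 7 = 2 ∨ (3 * v1 + v2) % 7 = 3 ∨
      (3 * v1 + v2) % 7 = 4 ∨ (3 * v1 + v2) % 7 = 5 ∨ (3 * v1 + v2) % 7 = 6 := by omega
  rcases hr with h | h | h | h | h | h
  · exact pds_exu v1 v2 0 (-1) (by unfold Dp; omega) hv' (by omega)
  · exact pds_exu v1 v2 (-1) 1 (by unfold Dp; omega) hv' (by omega)
  · exact pds_exu v1 v2 (-1) 0 (by unfold Dp; omega) hv' (by omega)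
  · exact pds_exu v1 v2 1 0 (by unfold Dp; omega) hv' (by omega)
  · exact pds_exu v1 v2 1 (-1) (by unfold Dp; omega) hv' (by omega)
  · exact pds_exu v1 v2 0 1 (by unfold Dp; omega) hv' (by omega)

lemma pdsSet_ne_univ : pdsSet ≠ Set.univ := by
  intro h
  have h1 : ((1, 0) : ℤ × ℤ) ∈ pdsSet := h ▸ Set.mem_univ _
  have h2 : (7:ℤ) ∣ 3 * 1 + 0 := h1
  omega

lemma exists_iso {S : Set (ℤ × ℤ)} (hS : IsPDS triLattice S) (hne : S ≠ Set.univ) :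
    ∃ φ : triLattice ≃g triLattice, ⇑φ '' pdsSet = S := by
  have hind := indep_of hS hne
  have hsex : ∃ p : ℤ × ℤ, p ∈ S := by
    by_cases h00 : ((0, 0) : ℤ × ℤ) ∈ S
    · exact ⟨_, h00⟩
    · obtain ⟨u, ⟨huS, -⟩, -⟩ := hS _ h00
      exact ⟨u, huS⟩
  obtain ⟨⟨s1, s2⟩, hs⟩ := hsex
  rcases chir hS hind hs with hA | hB
  · exact ⟨taut s1 s2, caseA hS hind hs hA⟩
  · have hS' := isPDS_comap mir hS
    have hind' := isIndep_comap mir hind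
    have hz : ((s1 + s2, -s2) : ℤ × ℤ) ∈ ⇑mir ⁻¹' S := by
      show mir (s1 + s2, -s2) ∈ S
      rw [mir_apply]
      exact memS hs (by ring) (by ring)
    have hz2 : ((s1 + s2 + 2, -s2 + 1) : ℤ × ℤ) ∈ ⇑mir ⁻¹' S := by
      show mir (s1 + s2 + 2, -s2 + 1) ∈ S
      rw [mir_apply]
      exact memS hB (by ring) (by ring)
    have hT := caseA hS' hind' hz hz2
    refine ⟨(taut (s1 + s2) (-s2)).trans mir, ?_⟩
    have hco : ⇑((taut (s1 + s2) (-s2)).trans mir) = ⇑mir ∘ ⇑(taut (s1 + s2) (-s2)) := rfl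
    rw [hco, Set.image_comp, hT]
    exact Set.image_preimage_eq S mir.surjective



/-- Up to symmetry, there is exactly one proper perfect dominating set in the
triangular lattice: one exists, and any two are related by a graph automorphism. -/
theorem unique_proper_PDS_up_to_symmetry :
    (∃ S : Set (ℤ × ℤ), IsPDS triLattice S ∧ S ≠ Set.univ) ∧
    (∀ S S' : Set (ℤ × ℤ),
      IsPDS triLattice S ∧ S ≠ Set.univ →
      IsPDS triLattice S' ∧ S' ≠ Set.univ →
      ∃ φ : triLattice ≃g triLattice, ⇑φ '' S = S') := by
  constructor
  · exact ⟨pdsSet, pdsSet_isPDS, pdsSet_ne_univ⟩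
  · rintro S S' ⟨hS, hne⟩ ⟨hS', hne'⟩
    obtain ⟨φ1, h1⟩ := exists_iso hS hne
    obtain ⟨φ2, h2⟩ := exists_iso hS' hne'
    refine ⟨RelIso.trans φ1.symm φ2, ?_⟩
    have hinv : ⇑φ1.symm '' S = pdsSet := by
      rw [← h1, ← Set.image_comp]
      simp [Function.comp]
    have hco : ⇑(RelIso.trans φ1.symm φ2) = ⇑φ2 ∘ ⇑φ1.symm := rfl
    rw [hco, Set.image_comp, hinv, h2]
end

section
/- For each residue j modulo 7 let S_j = {(x,y) ∈ ℤ × ℤ : 2x + 3y ≡ j (mod 7)}. Then the seven sets S_0, …, S_6 are pairwise disjoint, their union is all of ℤ × ℤ, each S_j is a 1-perfect code of the triangular lattice Δ, and each S_j is a parallel translate of S_0. In particular, the vertex set of Δ admits a partition into seven 1-perfect codes that are translates of one another. -/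
open SimpleGraph Set

/-- The residue class of `2x + 3y` modulo 7. -/
def codeClass (j : ZMod 7) : Set (ℤ × ℤ) :=
  {p | ((2 * p.1 + 3 * p.2 : ℤ) : ZMod 7) = j}

lemma mem_triDirs (d : ℤ × ℤ) : d ∈ triDirs ↔
    d = (1,0) ∨ d = (-1,0) ∨ d = (0,1) ∨ d = (0,-1) ∨ d = (1,-1) ∨ d = (-1,1) := by
  simp [triDirs]

lemma neg_mem_triDirs {d : ℤ × ℤ} (h : d ∈ triDirs) : -d ∈ triDirs := by
  rw [mem_triDirs] at h ⊢
  rcases h with h | h | h | h | h | h <;> subst h <;> simp [Prod.ext_iff]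

lemma ne_zero_of_mem_triDirs {d : ℤ × ℤ} (h : d ∈ triDirs) : d ≠ 0 := by
  rw [mem_triDirs] at h
  rcases h with h | h | h | h | h | h <;> subst h <;> decide

lemma adj_iff (v u : ℤ × ℤ) : triLattice.Adj v u ↔ u - v ∈ triDirs := by
  rw [triLattice, fromRel_adj]
  constructor
  · rintro ⟨hne, h | h⟩
    · have := neg_mem_triDirs h; simpa using this
    · exact h
  · intro h
    refine ⟨fun he => ne_zero_of_mem_triDirs h (by simp [he]), Or.inr h⟩

/-- weight of a step -/
def delta (d : ℤ × ℤ) : ZMod 7 := ((2 * d.1 + 3 * d.2 : ℤ) : ZMod 7)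

lemma delta_add (v d : ℤ × ℤ) :
    ((2 * (v + d).1 + 3 * (v + d).2 : ℤ) : ZMod 7)
      = ((2 * v.1 + 3 * v.2 : ℤ) : ZMod 7) + delta d := by
  simp only [Prod.fst_add, Prod.snd_add, delta]
  push_cast
  ring

lemma delta_ne_zero {d : ℤ × ℤ} (h : d ∈ triDirs) : delta d ≠ 0 := by
  rw [mem_triDirs] at h
  rcases h with h | h | h | h | h | h <;> subst h <;> decide

lemma delta_inj {d₁ d₂ : ℤ × ℤ} (h₁ : d₁ ∈ triDirs) (h₂ : d₂ ∈ triDirs)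
    (h : delta d₁ = delta d₂) : d₁ = d₂ := by
  rw [mem_triDirs] at h₁ h₂
  rcases h₁ with h₁ | h₁ | h₁ | h₁ | h₁ | h₁ <;> subst h₁ <;>
    rcases h₂ with h₂ | h₂ | h₂ | h₂ | h₂ | h₂ <;> subst h₂ <;>
    first | rfl | (exfalso; revert h; decide)

lemma delta_surj (c : ZMod 7) (hc : c ≠ 0) : ∃ d ∈ triDirs, delta d = c := by
  have h7 : c = 1 ∨ c = 2 ∨ c = 3 ∨ c = 4 ∨ c = 5 ∨ c = 6 := by revert hc; revert c; decide
  rcases h7 with h | h | h | h | h | h <;> subst h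
  · exact ⟨(-1,1), by rw [mem_triDirs]; tauto, by decide⟩
  · exact ⟨(1,0), by rw [mem_triDirs]; tauto, by decide⟩
  · exact ⟨(0,1), by rw [mem_triDirs]; tauto, by decide⟩
  · exact ⟨(0,-1), by rw [mem_triDirs]; tauto, by decide⟩
  · exact ⟨(-1,0), by rw [mem_triDirs]; tauto, by decide⟩
  · exact ⟨(1,-1), by rw [mem_triDirs]; tauto, by decide⟩

/-- The seven sets `S_j = {(x,y) : 2x + 3y ≡ j (mod 7)}` are pairwise disjoint,
cover `ℤ × ℤ`, each is a 1-perfect code of the triangular lattice, and each is a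
parallel translate of `S_0`. -/
theorem partition_into_seven_perfect_codes :
    (Pairwise fun i j : ZMod 7 => Disjoint (codeClass i) (codeClass j)) ∧
    (⋃ j : ZMod 7, codeClass j) = Set.univ ∧
    (∀ j : ZMod 7, IsPDS triLattice (codeClass j) ∧ IsIndep triLattice (codeClass j)) ∧
    (∀ j : ZMod 7, ∃ t : ℤ × ℤ, codeClass j = (fun p => p + t) '' codeClass 0) := by
  refine ⟨?_, ?_, ?_, ?_⟩
  · intro i j hij
    rw [Set.disjoint_left]
    intro p hi hj
    exact hij (hi.symm.trans hj)
  · ext p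
    simp only [Set.mem_iUnion, Set.mem_univ, iff_true]
    exact ⟨_, rfl⟩
  · intro j
    constructor
    · intro v hv
      have hc : ((2 * v.1 + 3 * v.2 : ℤ) : ZMod 7) ≠ j := hv
      obtain ⟨d, hd, hdd⟩ := delta_surj (j - ((2 * v.1 + 3 * v.2 : ℤ) : ZMod 7))
        (by intro h; apply hc; linear_combination -h)
      refine ⟨v + d, ⟨?_, ?_⟩, ?_⟩
      · show ((2 * (v + d).1 + 3 * (v + d).2 : ℤ) : ZMod 7) = j
        rw [delta_add, hdd]; ring
      · rw [adj_iff]; simpa using hd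
      · rintro u ⟨hu, hadj⟩
        rw [adj_iff] at hadj
        have hδ : delta (u - v) = delta d := by
          have : ((2 * u.1 + 3 * u.2 : ℤ) : ZMod 7) = j := hu
          have h2 := delta_add v (u - v)
          simp only [add_sub_cancel] at h2
          rw [this] at h2
          rw [hdd]
          linear_combination -h2
        have hud := delta_inj hadj hd hδ
        rw [← hud]; ring
    · intro a ha b hb hadj
      rw [adj_iff] at hadj
      have h2 := delta_add a (b - a)
      simp only [add_sub_cancel] at h2
      have : delta (b - a) = 0 := by
        have ha' : ((2 * a.1 + 3 * a.2 : ℤ) : ZMod 7) = j := ha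
        have hb' : ((2 * b.1 + 3 * b.2 : ℤ) : ZMod 7) = j := hb
        rw [ha', hb'] at h2
        linear_combination -h2
      exact delta_ne_zero hadj this
  · intro j
    refine ⟨(4 * (j.val : ℤ), 0), ?_⟩
    have ht : ((2 * (4 * (j.val : ℤ)) + 3 * 0 : ℤ) : ZMod 7) = j := by
      push_cast
      rw [ZMod.natCast_val, ZMod.cast_id]
      have h7 : (7 : ZMod 7) = 0 := by decide
      linear_combination j * h7
    ext p
    constructor
    · intro hp
      refine ⟨p - (4 * (j.val : ℤ), 0), ?_, by simp⟩
      show ((2 * (p - _).1 + 3 * (p - _).2 : ℤ) : ZMod 7) = 0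
      have := delta_add (p - (4 * (j.val : ℤ), 0)) ((4 * (j.val : ℤ), 0))
      simp only [sub_add_cancel] at this
      have hp' : ((2 * p.1 + 3 * p.2 : ℤ) : ZMod 7) = j := hp
      have hδt : delta ((4 * (j.val : ℤ), 0)) = j := ht
      rw [hp', hδt] at this
      linear_combination -this
    · rintro ⟨q, hq, rfl⟩
      show ((2 * (q + _).1 + 3 * (q + _).2 : ℤ) : ZMod 7) = j
      rw [delta_add]
      have hq' : ((2 * q.1 + 3 * q.2 : ℤ) : ZMod 7) = 0 := hq
      have hδt : delta ((4 * (j.val : ℤ), 0)) = j := ht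
      rw [hq', hδt]; ring
end

section
/- Let m, n ≥ 3 be integers. The vertex set of the toroidal triangular lattice Δ_{m,n} admits a partition into seven 1-perfect codes if and only if 7 divides m and 7 divides n; in that case the seven codes can be chosen to be translates of one another, and every 1-perfect code of Δ_{m,n} has cardinality m·n/7. -/
open SimpleGraph Set

/-- A 1-perfect code: a perfect dominating set which is independent. -/
def IsPerfectCode {V : Type*} (G : SimpleGraph V) (S : Set V) : Prop :=
  IsPDS G S ∧ IsIndep G S

namespace TorAux

variable {m n : ℕ}

def e (m n : ℕ) (d : ℤ × ℤ) : ZMod m × ZMod n := ((d.1 : ZMod m), (d.2 : ZMod n))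

lemma e_add (d d' : ℤ × ℤ) : e m n (d + d') = e m n d + e m n d' := by
  simp [e, Prod.ext_iff]

lemma e_sub (d d' : ℤ × ℤ) : e m n (d - d') = e m n d - e m n d' := by
  simp [e, Prod.ext_iff]

@[simp] lemma e_zero : e m n (0, 0) = 0 := by
  simp [e, Prod.ext_iff]

@[simp] lemma e_zero' : e m n 0 = 0 := by
  simp [e, Prod.ext_iff]

lemma add_e_e (p : ZMod m × ZMod n) (d d' : ℤ × ℤ) :
    p + e m n d + e m n d' = p + e m n (d + d') := by
  rw [e_add, add_assoc]

lemma tri1 : ((1,0) : ℤ × ℤ) ∈ triDirs := by left; rfl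
lemma tri2 : ((-1,0) : ℤ × ℤ) ∈ triDirs := by right; left; rfl
lemma tri3 : ((0,1) : ℤ × ℤ) ∈ triDirs := by right; right; left; rfl
lemma tri4 : ((0,-1) : ℤ × ℤ) ∈ triDirs := by right; right; right; left; rfl
lemma tri5 : ((1,-1) : ℤ × ℤ) ∈ triDirs := by right; right; right; right; left; rfl
lemma tri6 : ((-1,1) : ℤ × ℤ) ∈ triDirs := by right; right; right; right; right; rfl

lemma ene (hm : 3 ≤ m) (hn : 3 ≤ n) (d : ℤ × ℤ)
    (h : (d.1 ≠ 0 ∧ d.1.natAbs < 3) ∨ (d.2 ≠ 0 ∧ d.2.natAbs < 3)) : e m n d ≠ 0 := by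
  intro h0
  have h1 : (d.1 : ZMod m) = 0 := congrArg Prod.fst h0
  have h2 : (d.2 : ZMod n) = 0 := congrArg Prod.snd h0
  rcases h with ⟨hne, hlt⟩ | ⟨hne, hlt⟩
  · rw [ZMod.intCast_zmod_eq_zero_iff_dvd] at h1
    exact hne (Int.eq_zero_of_dvd_of_natAbs_lt_natAbs h1 (by simpa using hlt.trans_le (by omega)))
  · rw [ZMod.intCast_zmod_eq_zero_iff_dvd] at h2
    exact hne (Int.eq_zero_of_dvd_of_natAbs_lt_natAbs h2 (by simpa using hlt.trans_le (by omega)))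

lemma adj_e (hm : 3 ≤ m) (hn : 3 ≤ n) (p : ZMod m × ZMod n) {d : ℤ × ℤ} (hd : d ∈ triDirs) :
    (torLattice m n).Adj p (p + e m n d) := by
  have h0 : e m n d ≠ 0 := by
    simp only [triDirs, Set.mem_insert_iff, Set.mem_singleton_iff] at hd
    rcases hd with rfl | rfl | rfl | rfl | rfl | rfl <;>
      exact ene hm hn _ (by norm_num)
  rw [torLattice, SimpleGraph.fromRel_adj]
  refine ⟨fun h => h0 (left_eq_add.1 h), Or.inr ⟨d, hd, ?_⟩⟩
  show p + e m n d - p = e m n d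
  rw [add_sub_cancel_left]

lemma no_close {S : Set (ZMod m × ZMod n)} (hS : IsPerfectCode (torLattice m n) S)
    {x y w : ZMod m × ZMod n} (hx : x ∈ S) (hy : y ∈ S) (hxy : x ≠ y)
    (h1 : w = x ∨ (torLattice m n).Adj w x)
    (h2 : w = y ∨ (torLattice m n).Adj w y) : False := by
  by_cases hw : w ∈ S
  · rcases h1 with rfl | h1
    · rcases h2 with rfl | h2
      · exact hxy rfl
      · exact hS.2 w hw y hy h2
    · exact hS.2 w hw x hx h1
  · have h1' : (torLattice m n).Adj w x := h1.resolve_left (by rintro rfl; exact hw hx)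
    have h2' : (torLattice m n).Adj w y := h2.resolve_left (by rintro rfl; exact hw hy)
    obtain ⟨u, _, huniq⟩ := hS.1 w hw
    exact hxy ((huniq x ⟨hx, h1'⟩).trans (huniq y ⟨hy, h2'⟩).symm)

lemma conflict {S : Set (ZMod m × ZMod n)} (hS : IsPerfectCode (torLattice m n) S)
    (hm : 3 ≤ m) (hn : 3 ≤ n) (s : ZMod m × ZMod n) {δx δy : ℤ × ℤ}
    (γ dx dy dxy : ℤ × ℤ)
    (hx : s + e m n δx ∈ S) (hy : s + e m n δy ∈ S)
    (ex : δx = γ + dx) (ey : δy = γ + dy) (exy : δx = δy + dxy)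
    (hdxy : e m n dxy ≠ 0)
    (h1 : dx = 0 ∨ dx ∈ triDirs) (h2 : dy = 0 ∨ dy ∈ triDirs) : False := by
  have hne : s + e m n δx ≠ s + e m n δy := by
    intro h
    apply hdxy
    have h' := add_left_cancel h
    rw [exy, e_add] at h'
    exact (left_eq_add.1 h'.symm)
  refine no_close hS hx hy hne (w := s + e m n γ) ?_ ?_
  · rcases h1 with rfl | h1
    · left; rw [ex, add_zero]
    · right
      have h' : s + e m n δx = (s + e m n γ) + e m n dx := by rw [ex, e_add, add_assoc]
      rw [h']; exact adj_e hm hn _ h1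
  · rcases h2 with rfl | h2
    · left; rw [ey, add_zero]
    · right
      have h' : s + e m n δy = (s + e m n γ) + e m n dy := by rw [ey, e_add, add_assoc]
      rw [h']; exact adj_e hm hn _ h2

lemma adj_form {u v : ZMod m × ZMod n} (h : (torLattice m n).Adj v u) :
    ∃ d ∈ triDirs, u = v + e m n d := by
  rw [torLattice, SimpleGraph.fromRel_adj] at h
  obtain ⟨hne, h | h⟩ := h
  · obtain ⟨d, hd, hd2⟩ := h
    simp only [triDirs, Set.mem_insert_iff, Set.mem_singleton_iff] at hd
    have hu : u = v - e m n d := by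
      have : v - u = e m n d := hd2
      rw [← this]; exact (sub_sub_cancel v u).symm
    rcases hd with rfl | rfl | rfl | rfl | rfl | rfl
    · exact ⟨(-1,0), tri2, by rw [hu]; simp [e, Prod.ext_iff, sub_eq_add_neg]⟩
    · exact ⟨(1,0), tri1, by rw [hu]; simp [e, Prod.ext_iff, sub_eq_add_neg]⟩
    · exact ⟨(0,-1), tri4, by rw [hu]; simp [e, Prod.ext_iff, sub_eq_add_neg]⟩
    · exact ⟨(0,1), tri3, by rw [hu]; simp [e, Prod.ext_iff, sub_eq_add_neg]⟩
    · exact ⟨(-1,1), tri6, by rw [hu]; simp [e, Prod.ext_iff, sub_eq_add_neg]⟩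
    · exact ⟨(1,-1), tri5, by rw [hu]; simp [e, Prod.ext_iff, sub_eq_add_neg]⟩
  · obtain ⟨d, hd, hd2⟩ := h
    refine ⟨d, hd, ?_⟩
    have : u - v = e m n d := hd2
    rw [← this, add_sub_cancel]

lemma cover {S : Set (ZMod m × ZMod n)} (hS : IsPDS (torLattice m n) S)
    (v : ZMod m × ZMod n) :
    v ∈ S ∨ v + e m n (1,0) ∈ S ∨ v + e m n (-1,0) ∈ S ∨ v + e m n (0,1) ∈ S ∨
    v + e m n (0,-1) ∈ S ∨ v + e m n (1,-1) ∈ S ∨ v + e m n (-1,1) ∈ S := by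
  by_cases hv : v ∈ S
  · exact Or.inl hv
  obtain ⟨u, ⟨hu, hadj⟩, -⟩ := hS v hv
  obtain ⟨d, hd, rfl⟩ := adj_form hadj
  simp only [triDirs, Set.mem_insert_iff, Set.mem_singleton_iff] at hd
  rcases hd with rfl | rfl | rfl | rfl | rfl | rfl
  · exact Or.inr (Or.inl hu)
  · exact Or.inr (Or.inr (Or.inl hu))
  · exact Or.inr (Or.inr (Or.inr (Or.inl hu)))
  · exact Or.inr (Or.inr (Or.inr (Or.inr (Or.inl hu))))
  · exact Or.inr (Or.inr (Or.inr (Or.inr (Or.inr (Or.inl hu)))))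
  · exact Or.inr (Or.inr (Or.inr (Or.inr (Or.inr (Or.inr hu)))))

lemma F1 {S : Set (ZMod m × ZMod n)} (hS : IsPerfectCode (torLattice m n) S)
    (hm : 3 ≤ m) (hn : 3 ≤ n) {s : ZMod m × ZMod n} (hs : s ∈ S) :
    s + e m n (3,-1) ∈ S ∨ s + e m n (3,-2) ∈ S := by
  have hs0 : s + e m n (0,0) ∈ S := by simpa using hs
  have h7 := cover hS.1 (s + e m n (2,-1))
  simp only [add_e_e, Prod.mk_add_mk] at h7
  norm_num at h7
  rcases h7 with h|h|h|h|h|h|h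
  · exact (conflict hS hm hn s (1,0) (1,-1) (-1,0) (2,-1) h hs0 (by decide) (by decide) (by decide) (ene hm hn _ (by decide)) (Or.inr tri5) (Or.inr tri2)).elim
  · exact Or.inl h
  · exact (conflict hS hm hn s (0,0) (1,-1) (0,0) (1,-1) h hs0 (by decide) (by decide) (by decide) (ene hm hn _ (by decide)) (Or.inr tri5) (Or.inl rfl)).elim
  · exact (conflict hS hm hn s (1,0) (1,0) (-1,0) (2,0) h hs0 (by decide) (by decide) (by decide) (ene hm hn _ (by decide)) (Or.inr tri1) (Or.inr tri2)).elim
  · exact (conflict hS hm hn s (1,-1) (1,-1) (-1,1) (2,-2) h hs0 (by decide) (by decide) (by decide) (ene hm hn _ (by decide)) (Or.inr tri5) (Or.inr tri6)).elim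
  · exact Or.inr h
  · exact (conflict hS hm hn s (0,0) (1,0) (0,0) (1,0) h hs0 (by decide) (by decide) (by decide) (ene hm hn _ (by decide)) (Or.inr tri1) (Or.inl rfl)).elim

lemma F2 {S : Set (ZMod m × ZMod n)} (hS : IsPerfectCode (torLattice m n) S)
    (hm : 3 ≤ m) (hn : 3 ≤ n) {s : ZMod m × ZMod n} (hs : s ∈ S) :
    s + e m n (1,2) ∈ S ∨ s + e m n (2,1) ∈ S := by
  have hs0 : s + e m n (0,0) ∈ S := by simpa using hs
  have h7 := cover hS.1 (s + e m n (1,1))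
  simp only [add_e_e, Prod.mk_add_mk] at h7
  norm_num at h7
  rcases h7 with h|h|h|h|h|h|h
  · exact (conflict hS hm hn s (1,0) (0,1) (-1,0) (1,1) h hs0 (by decide) (by decide) (by decide) (ene hm hn _ (by decide)) (Or.inr tri3) (Or.inr tri2)).elim
  · exact Or.inr h
  · exact (conflict hS hm hn s (0,0) (0,1) (0,0) (0,1) h hs0 (by decide) (by decide) (by decide) (ene hm hn _ (by decide)) (Or.inr tri3) (Or.inl rfl)).elim
  · exact Or.inl h
  · exact (conflict hS hm hn s (0,0) (1,0) (0,0) (1,0) h hs0 (by decide) (by decide) (by decide) (ene hm hn _ (by decide)) (Or.inr tri1) (Or.inl rfl)).elim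
  · exact (conflict hS hm hn s (1,0) (1,0) (-1,0) (2,0) h hs0 (by decide) (by decide) (by decide) (ene hm hn _ (by decide)) (Or.inr tri1) (Or.inr tri2)).elim
  · exact (conflict hS hm hn s (0,1) (0,1) (0,-1) (0,2) h hs0 (by decide) (by decide) (by decide) (ene hm hn _ (by decide)) (Or.inr tri3) (Or.inr tri4)).elim

lemma F4 {S : Set (ZMod m × ZMod n)} (hS : IsPerfectCode (torLattice m n) S)
    (hm : 3 ≤ m) (hn : 3 ≤ n) {s : ZMod m × ZMod n} (hs : s ∈ S) :
    s + e m n (-3,1) ∈ S ∨ s + e m n (-3,2) ∈ S := by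
  have hs0 : s + e m n (0,0) ∈ S := by simpa using hs
  have h7 := cover hS.1 (s + e m n (-2,1))
  simp only [add_e_e, Prod.mk_add_mk] at h7
  norm_num at h7
  rcases h7 with h|h|h|h|h|h|h
  · exact (conflict hS hm hn s (-1,0) (-1,1) (1,0) (-2,1) h hs0 (by decide) (by decide) (by decide) (ene hm hn _ (by decide)) (Or.inr tri6) (Or.inr tri1)).elim
  · exact (conflict hS hm hn s (0,0) (-1,1) (0,0) (-1,1) h hs0 (by decide) (by decide) (by decide) (ene hm hn _ (by decide)) (Or.inr tri6) (Or.inl rfl)).elim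
  · exact Or.inl h
  · exact (conflict hS hm hn s (-1,1) (-1,1) (1,-1) (-2,2) h hs0 (by decide) (by decide) (by decide) (ene hm hn _ (by decide)) (Or.inr tri6) (Or.inr tri5)).elim
  · exact (conflict hS hm hn s (-1,0) (-1,0) (1,0) (-2,0) h hs0 (by decide) (by decide) (by decide) (ene hm hn _ (by decide)) (Or.inr tri2) (Or.inr tri1)).elim
  · exact (conflict hS hm hn s (0,0) (-1,0) (0,0) (-1,0) h hs0 (by decide) (by decide) (by decide) (ene hm hn _ (by decide)) (Or.inr tri2) (Or.inl rfl)).elim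
  · exact Or.inr h

lemma F5 {S : Set (ZMod m × ZMod n)} (hS : IsPerfectCode (torLattice m n) S)
    (hm : 3 ≤ m) (hn : 3 ≤ n) {s : ZMod m × ZMod n} (hs : s ∈ S) :
    s + e m n (-1,-2) ∈ S ∨ s + e m n (-2,-1) ∈ S := by
  have hs0 : s + e m n (0,0) ∈ S := by simpa using hs
  have h7 := cover hS.1 (s + e m n (-1,-1))
  simp only [add_e_e, Prod.mk_add_mk] at h7
  norm_num at h7
  rcases h7 with h|h|h|h|h|h|h
  · exact (conflict hS hm hn s (-1,0) (0,-1) (1,0) (-1,-1) h hs0 (by decide) (by decide) (by decide) (ene hm hn _ (by decide)) (Or.inr tri4) (Or.inr tri1)).elim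
  · exact (conflict hS hm hn s (0,0) (0,-1) (0,0) (0,-1) h hs0 (by decide) (by decide) (by decide) (ene hm hn _ (by decide)) (Or.inr tri4) (Or.inl rfl)).elim
  · exact Or.inr h
  · exact (conflict hS hm hn s (0,0) (-1,0) (0,0) (-1,0) h hs0 (by decide) (by decide) (by decide) (ene hm hn _ (by decide)) (Or.inr tri2) (Or.inl rfl)).elim
  · exact Or.inl h
  · exact (conflict hS hm hn s (0,-1) (0,-1) (0,1) (0,-2) h hs0 (by decide) (by decide) (by decide) (ene hm hn _ (by decide)) (Or.inr tri4) (Or.inr tri3)).elim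
  · exact (conflict hS hm hn s (-1,0) (-1,0) (1,0) (-2,0) h hs0 (by decide) (by decide) (by decide) (ene hm hn _ (by decide)) (Or.inr tri2) (Or.inr tri1)).elim

lemma F6 {S : Set (ZMod m × ZMod n)} (hS : IsPerfectCode (torLattice m n) S)
    (hm : 3 ≤ m) (hn : 3 ≤ n) {s : ZMod m × ZMod n} (hs : s ∈ S) :
    s + e m n (2,-3) ∈ S ∨ s + e m n (1,-3) ∈ S := by
  have hs0 : s + e m n (0,0) ∈ S := by simpa using hs
  have h7 := cover hS.1 (s + e m n (1,-2))
  simp only [add_e_e, Prod.mk_add_mk] at h7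
  norm_num at h7
  rcases h7 with h|h|h|h|h|h|h
  · exact (conflict hS hm hn s (1,-1) (0,-1) (-1,1) (1,-2) h hs0 (by decide) (by decide) (by decide) (ene hm hn _ (by decide)) (Or.inr tri4) (Or.inr tri6)).elim
  · exact (conflict hS hm hn s (1,-1) (1,-1) (-1,1) (2,-2) h hs0 (by decide) (by decide) (by decide) (ene hm hn _ (by decide)) (Or.inr tri5) (Or.inr tri6)).elim
  · exact (conflict hS hm hn s (0,-1) (0,-1) (0,1) (0,-2) h hs0 (by decide) (by decide) (by decide) (ene hm hn _ (by decide)) (Or.inr tri4) (Or.inr tri3)).elim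
  · exact (conflict hS hm hn s (0,0) (1,-1) (0,0) (1,-1) h hs0 (by decide) (by decide) (by decide) (ene hm hn _ (by decide)) (Or.inr tri5) (Or.inl rfl)).elim
  · exact Or.inr h
  · exact Or.inl h
  · exact (conflict hS hm hn s (0,0) (0,-1) (0,0) (0,-1) h hs0 (by decide) (by decide) (by decide) (ene hm hn _ (by decide)) (Or.inr tri4) (Or.inl rfl)).elim

lemma M1 {S : Set (ZMod m × ZMod n)} (hS : IsPerfectCode (torLattice m n) S)
    (hm : 3 ≤ m) (hn : 3 ≤ n) {s : ZMod m × ZMod n} (hs : s ∈ S) :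
    s + e m n (3,0) ∈ S ∨ s + e m n (2,1) ∈ S ∨ s + e m n (3,-1) ∈ S := by
  have hs0 : s + e m n (0,0) ∈ S := by simpa using hs
  have h7 := cover hS.1 (s + e m n (2,0))
  simp only [add_e_e, Prod.mk_add_mk] at h7
  norm_num at h7
  rcases h7 with h|h|h|h|h|h|h
  · exact (conflict hS hm hn s (1,0) (1,0) (-1,0) (2,0) h hs0 (by decide) (by decide) (by decide) (ene hm hn _ (by decide)) (Or.inr tri1) (Or.inr tri2)).elim
  · exact Or.inl h
  · exact (conflict hS hm hn s (0,0) (1,0) (0,0) (1,0) h hs0 (by decide) (by decide) (by decide) (ene hm hn _ (by decide)) (Or.inr tri1) (Or.inl rfl)).elim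
  · exact Or.inr (Or.inl h)
  · exact (conflict hS hm hn s (1,0) (1,-1) (-1,0) (2,-1) h hs0 (by decide) (by decide) (by decide) (ene hm hn _ (by decide)) (Or.inr tri5) (Or.inr tri2)).elim
  · exact Or.inr (Or.inr h)
  · exact (conflict hS hm hn s (1,0) (0,1) (-1,0) (1,1) h hs0 (by decide) (by decide) (by decide) (ene hm hn _ (by decide)) (Or.inr tri3) (Or.inr tri2)).elim

lemma M4 {S : Set (ZMod m × ZMod n)} (hS : IsPerfectCode (torLattice m n) S)
    (hm : 3 ≤ m) (hn : 3 ≤ n) {s : ZMod m × ZMod n} (hs : s ∈ S) :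
    s + e m n (-3,0) ∈ S ∨ s + e m n (-2,-1) ∈ S ∨ s + e m n (-3,1) ∈ S := by
  have hs0 : s + e m n (0,0) ∈ S := by simpa using hs
  have h7 := cover hS.1 (s + e m n (-2,0))
  simp only [add_e_e, Prod.mk_add_mk] at h7
  norm_num at h7
  rcases h7 with h|h|h|h|h|h|h
  · exact (conflict hS hm hn s (-1,0) (-1,0) (1,0) (-2,0) h hs0 (by decide) (by decide) (by decide) (ene hm hn _ (by decide)) (Or.inr tri2) (Or.inr tri1)).elim
  · exact (conflict hS hm hn s (0,0) (-1,0) (0,0) (-1,0) h hs0 (by decide) (by decide) (by decide) (ene hm hn _ (by decide)) (Or.inr tri2) (Or.inl rfl)).elim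
  · exact Or.inl h
  · exact (conflict hS hm hn s (-1,0) (-1,1) (1,0) (-2,1) h hs0 (by decide) (by decide) (by decide) (ene hm hn _ (by decide)) (Or.inr tri6) (Or.inr tri1)).elim
  · exact Or.inr (Or.inl h)
  · exact (conflict hS hm hn s (-1,0) (0,-1) (1,0) (-1,-1) h hs0 (by decide) (by decide) (by decide) (ene hm hn _ (by decide)) (Or.inr tri4) (Or.inr tri1)).elim
  · exact Or.inr (Or.inr h)

lemma M5 {S : Set (ZMod m × ZMod n)} (hS : IsPerfectCode (torLattice m n) S)
    (hm : 3 ≤ m) (hn : 3 ≤ n) {s : ZMod m × ZMod n} (hs : s ∈ S) :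
    s + e m n (-1,-2) ∈ S ∨ s + e m n (0,-3) ∈ S ∨ s + e m n (1,-3) ∈ S := by
  have hs0 : s + e m n (0,0) ∈ S := by simpa using hs
  have h7 := cover hS.1 (s + e m n (0,-2))
  simp only [add_e_e, Prod.mk_add_mk] at h7
  norm_num at h7
  rcases h7 with h|h|h|h|h|h|h
  · exact (conflict hS hm hn s (0,-1) (0,-1) (0,1) (0,-2) h hs0 (by decide) (by decide) (by decide) (ene hm hn _ (by decide)) (Or.inr tri4) (Or.inr tri3)).elim
  · exact (conflict hS hm hn s (1,-1) (0,-1) (-1,1) (1,-2) h hs0 (by decide) (by decide) (by decide) (ene hm hn _ (by decide)) (Or.inr tri4) (Or.inr tri6)).elim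
  · exact Or.inl h
  · exact (conflict hS hm hn s (0,0) (0,-1) (0,0) (0,-1) h hs0 (by decide) (by decide) (by decide) (ene hm hn _ (by decide)) (Or.inr tri4) (Or.inl rfl)).elim
  · exact Or.inr (Or.inl h)
  · exact Or.inr (Or.inr h)
  · exact (conflict hS hm hn s (-1,0) (0,-1) (1,0) (-1,-1) h hs0 (by decide) (by decide) (by decide) (ene hm hn _ (by decide)) (Or.inr tri4) (Or.inr tri1)).elim

lemma M6 {S : Set (ZMod m × ZMod n)} (hS : IsPerfectCode (torLattice m n) S)
    (hm : 3 ≤ m) (hn : 3 ≤ n) {s : ZMod m × ZMod n} (hs : s ∈ S) :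
    s + e m n (3,-2) ∈ S ∨ s + e m n (2,-3) ∈ S ∨ s + e m n (3,-3) ∈ S := by
  have hs0 : s + e m n (0,0) ∈ S := by simpa using hs
  have h7 := cover hS.1 (s + e m n (2,-2))
  simp only [add_e_e, Prod.mk_add_mk] at h7
  norm_num at h7
  rcases h7 with h|h|h|h|h|h|h
  · exact (conflict hS hm hn s (1,-1) (1,-1) (-1,1) (2,-2) h hs0 (by decide) (by decide) (by decide) (ene hm hn _ (by decide)) (Or.inr tri5) (Or.inr tri6)).elim
  · exact Or.inl h
  · exact (conflict hS hm hn s (1,-1) (0,-1) (-1,1) (1,-2) h hs0 (by decide) (by decide) (by decide) (ene hm hn _ (by decide)) (Or.inr tri4) (Or.inr tri6)).elim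
  · exact (conflict hS hm hn s (1,0) (1,-1) (-1,0) (2,-1) h hs0 (by decide) (by decide) (by decide) (ene hm hn _ (by decide)) (Or.inr tri5) (Or.inr tri2)).elim
  · exact Or.inr (Or.inl h)
  · exact Or.inr (Or.inr h)
  · exact (conflict hS hm hn s (0,0) (1,-1) (0,0) (1,-1) h hs0 (by decide) (by decide) (by decide) (ene hm hn _ (by decide)) (Or.inr tri5) (Or.inl rfl)).elim
lemma pair1 {S : Set (ZMod m × ZMod n)} (hS : IsPerfectCode (torLattice m n) S)
    (hm : 3 ≤ m) (hn : 3 ≤ n) {s : ZMod m × ZMod n} (hs : s ∈ S) :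
    (s + e m n (3,-1) ∈ S ∧ s + e m n (1,2) ∈ S) ∨ (s + e m n (3,-2) ∈ S ∧ s + e m n (2,1) ∈ S) := by
  have f1 := F1 hS hm hn hs
  have f2 := F2 hS hm hn hs
  have mm := M1 hS hm hn hs
  have c1 : s + e m n (3,-1) ∈ S → s + e m n (2,1) ∈ S → False := fun hA hB =>
    conflict hS hm hn s (2,0) (1,-1) (0,1) (1,-2) hA hB (by decide) (by decide) (by decide) (ene hm hn _ (by decide)) (Or.inr tri5) (Or.inr tri3)
  have c2 : s + e m n (3,0) ∈ S → s + e m n (3,-2) ∈ S → False := fun hA hB =>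
    conflict hS hm hn s (3,-1) (0,1) (0,-1) (0,2) hA hB (by decide) (by decide) (by decide) (ene hm hn _ (by decide)) (Or.inr tri3) (Or.inr tri4)
  have c3 : s + e m n (2,1) ∈ S → s + e m n (1,2) ∈ S → False := fun hA hB =>
    conflict hS hm hn s (2,1) (0,0) (-1,1) (1,-1) hA hB (by decide) (by decide) (by decide) (ene hm hn _ (by decide)) (Or.inl rfl) (Or.inr tri6)
  have c4 : s + e m n (3,-1) ∈ S → s + e m n (3,-2) ∈ S → False := fun hA hB =>
    conflict hS hm hn s (3,-1) (0,0) (0,-1) (0,1) hA hB (by decide) (by decide) (by decide) (ene hm hn _ (by decide)) (Or.inl rfl) (Or.inr tri4)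
  tauto

lemma pair4 {S : Set (ZMod m × ZMod n)} (hS : IsPerfectCode (torLattice m n) S)
    (hm : 3 ≤ m) (hn : 3 ≤ n) {s : ZMod m × ZMod n} (hs : s ∈ S) :
    (s + e m n (-3,1) ∈ S ∧ s + e m n (-1,-2) ∈ S) ∨ (s + e m n (-3,2) ∈ S ∧ s + e m n (-2,-1) ∈ S) := by
  have f1 := F4 hS hm hn hs
  have f2 := F5 hS hm hn hs
  have mm := M4 hS hm hn hs
  have c1 : s + e m n (-3,1) ∈ S → s + e m n (-2,-1) ∈ S → False := fun hA hB =>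
    conflict hS hm hn s (-2,0) (-1,1) (0,-1) (-1,2) hA hB (by decide) (by decide) (by decide) (ene hm hn _ (by decide)) (Or.inr tri6) (Or.inr tri4)
  have c2 : s + e m n (-3,0) ∈ S → s + e m n (-3,2) ∈ S → False := fun hA hB =>
    conflict hS hm hn s (-3,1) (0,-1) (0,1) (0,-2) hA hB (by decide) (by decide) (by decide) (ene hm hn _ (by decide)) (Or.inr tri4) (Or.inr tri3)
  have c3 : s + e m n (-2,-1) ∈ S → s + e m n (-1,-2) ∈ S → False := fun hA hB =>
    conflict hS hm hn s (-2,-1) (0,0) (1,-1) (-1,1) hA hB (by decide) (by decide) (by decide) (ene hm hn _ (by decide)) (Or.inl rfl) (Or.inr tri5)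
  have c4 : s + e m n (-3,1) ∈ S → s + e m n (-3,2) ∈ S → False := fun hA hB =>
    conflict hS hm hn s (-3,1) (0,0) (0,1) (0,-1) hA hB (by decide) (by decide) (by decide) (ene hm hn _ (by decide)) (Or.inl rfl) (Or.inr tri3)
  tauto

lemma pair5 {S : Set (ZMod m × ZMod n)} (hS : IsPerfectCode (torLattice m n) S)
    (hm : 3 ≤ m) (hn : 3 ≤ n) {s : ZMod m × ZMod n} (hs : s ∈ S) :
    (s + e m n (-1,-2) ∈ S ∧ s + e m n (2,-3) ∈ S) ∨ (s + e m n (-2,-1) ∈ S ∧ s + e m n (1,-3) ∈ S) := by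
  have f1 := F5 hS hm hn hs
  have f2 := F6 hS hm hn hs
  have mm := M5 hS hm hn hs
  have c1 : s + e m n (-1,-2) ∈ S → s + e m n (1,-3) ∈ S → False := fun hA hB =>
    conflict hS hm hn s (0,-2) (-1,0) (1,-1) (-2,1) hA hB (by decide) (by decide) (by decide) (ene hm hn _ (by decide)) (Or.inr tri2) (Or.inr tri5)
  have c2 : s + e m n (0,-3) ∈ S → s + e m n (-2,-1) ∈ S → False := fun hA hB =>
    conflict hS hm hn s (-1,-2) (1,-1) (-1,1) (2,-2) hA hB (by decide) (by decide) (by decide) (ene hm hn _ (by decide)) (Or.inr tri5) (Or.inr tri6)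
  have c3 : s + e m n (1,-3) ∈ S → s + e m n (2,-3) ∈ S → False := fun hA hB =>
    conflict hS hm hn s (1,-3) (0,0) (1,0) (-1,0) hA hB (by decide) (by decide) (by decide) (ene hm hn _ (by decide)) (Or.inl rfl) (Or.inr tri1)
  have c4 : s + e m n (-1,-2) ∈ S → s + e m n (-2,-1) ∈ S → False := fun hA hB =>
    conflict hS hm hn s (-1,-2) (0,0) (-1,1) (1,-1) hA hB (by decide) (by decide) (by decide) (ene hm hn _ (by decide)) (Or.inl rfl) (Or.inr tri6)
  tauto

lemma pair6 {S : Set (ZMod m × ZMod n)} (hS : IsPerfectCode (torLattice m n) S)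
    (hm : 3 ≤ m) (hn : 3 ≤ n) {s : ZMod m × ZMod n} (hs : s ∈ S) :
    (s + e m n (2,-3) ∈ S ∧ s + e m n (3,-1) ∈ S) ∨ (s + e m n (1,-3) ∈ S ∧ s + e m n (3,-2) ∈ S) := by
  have f1 := F6 hS hm hn hs
  have f2 := F1 hS hm hn hs
  have mm := M6 hS hm hn hs
  have c1 : s + e m n (2,-3) ∈ S → s + e m n (3,-2) ∈ S → False := fun hA hB =>
    conflict hS hm hn s (2,-2) (0,-1) (1,0) (-1,-1) hA hB (by decide) (by decide) (by decide) (ene hm hn _ (by decide)) (Or.inr tri4) (Or.inr tri1)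
  have c2 : s + e m n (3,-3) ∈ S → s + e m n (1,-3) ∈ S → False := fun hA hB =>
    conflict hS hm hn s (2,-3) (1,0) (-1,0) (2,0) hA hB (by decide) (by decide) (by decide) (ene hm hn _ (by decide)) (Or.inr tri1) (Or.inr tri2)
  have c3 : s + e m n (3,-2) ∈ S → s + e m n (3,-1) ∈ S → False := fun hA hB =>
    conflict hS hm hn s (3,-2) (0,0) (0,1) (0,-1) hA hB (by decide) (by decide) (by decide) (ene hm hn _ (by decide)) (Or.inl rfl) (Or.inr tri3)
  have c4 : s + e m n (2,-3) ∈ S → s + e m n (1,-3) ∈ S → False := fun hA hB =>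
    conflict hS hm hn s (2,-3) (0,0) (-1,0) (1,0) hA hB (by decide) (by decide) (by decide) (ene hm hn _ (by decide)) (Or.inl rfl) (Or.inr tri2)
  tauto

lemma stepA4 {S : Set (ZMod m × ZMod n)} (hS : IsPerfectCode (torLattice m n) S)
    (hm : 3 ≤ m) (hn : 3 ≤ n) {s : ZMod m × ZMod n} (hs : s ∈ S) (hA : s + e m n (-3,1) ∈ S) :
    s + e m n (-1,-2) ∈ S := by
  rcases pair4 hS hm hn hs with ⟨_, h⟩ | ⟨hB, _⟩
  · exact h
  · exact (conflict hS hm hn s (-3,1) (0,0) (0,1) (0,-1) hA hB (by decide) (by decide)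
      (by decide) (ene hm hn _ (by decide)) (Or.inl rfl) (Or.inr tri3)).elim

lemma stepA5 {S : Set (ZMod m × ZMod n)} (hS : IsPerfectCode (torLattice m n) S)
    (hm : 3 ≤ m) (hn : 3 ≤ n) {s : ZMod m × ZMod n} (hs : s ∈ S) (hA : s + e m n (-1,-2) ∈ S) :
    s + e m n (2,-3) ∈ S := by
  rcases pair5 hS hm hn hs with ⟨_, h⟩ | ⟨hB, _⟩
  · exact h
  · exact (conflict hS hm hn s (-1,-2) (0,0) (-1,1) (1,-1) hA hB (by decide) (by decide)
      (by decide) (ene hm hn _ (by decide)) (Or.inl rfl) (Or.inr tri6)).elim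

lemma stepA6 {S : Set (ZMod m × ZMod n)} (hS : IsPerfectCode (torLattice m n) S)
    (hm : 3 ≤ m) (hn : 3 ≤ n) {s : ZMod m × ZMod n} (hs : s ∈ S) (hA : s + e m n (2,-3) ∈ S) :
    s + e m n (3,-1) ∈ S := by
  rcases pair6 hS hm hn hs with ⟨_, h⟩ | ⟨hB, _⟩
  · exact h
  · exact (conflict hS hm hn s (2,-3) (0,0) (-1,0) (1,0) hA hB (by decide) (by decide)
      (by decide) (ene hm hn _ (by decide)) (Or.inl rfl) (Or.inr tri2)).elim

lemma stepA1 {S : Set (ZMod m × ZMod n)} (hS : IsPerfectCode (torLattice m n) S)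
    (hm : 3 ≤ m) (hn : 3 ≤ n) {s : ZMod m × ZMod n} (hs : s ∈ S) (hA : s + e m n (3,-1) ∈ S) :
    s + e m n (1,2) ∈ S := by
  rcases pair1 hS hm hn hs with ⟨_, h⟩ | ⟨hB, _⟩
  · exact h
  · exact (conflict hS hm hn s (3,-1) (0,0) (0,-1) (0,1) hA hB (by decide) (by decide)
      (by decide) (ene hm hn _ (by decide)) (Or.inl rfl) (Or.inr tri4)).elim

lemma stepB4 {S : Set (ZMod m × ZMod n)} (hS : IsPerfectCode (torLattice m n) S)
    (hm : 3 ≤ m) (hn : 3 ≤ n) {s : ZMod m × ZMod n} (hs : s ∈ S) (hB : s + e m n (-3,2) ∈ S) :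
    s + e m n (-2,-1) ∈ S := by
  rcases pair4 hS hm hn hs with ⟨hA, _⟩ | ⟨_, h⟩
  · exact (conflict hS hm hn s (-3,1) (0,0) (0,1) (0,-1) hA hB (by decide) (by decide)
      (by decide) (ene hm hn _ (by decide)) (Or.inl rfl) (Or.inr tri3)).elim
  · exact h

lemma stepB5 {S : Set (ZMod m × ZMod n)} (hS : IsPerfectCode (torLattice m n) S)
    (hm : 3 ≤ m) (hn : 3 ≤ n) {s : ZMod m × ZMod n} (hs : s ∈ S) (hB : s + e m n (-2,-1) ∈ S) :
    s + e m n (1,-3) ∈ S := by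
  rcases pair5 hS hm hn hs with ⟨hA, _⟩ | ⟨_, h⟩
  · exact (conflict hS hm hn s (-1,-2) (0,0) (-1,1) (1,-1) hA hB (by decide) (by decide)
      (by decide) (ene hm hn _ (by decide)) (Or.inl rfl) (Or.inr tri6)).elim
  · exact h

lemma stepB6 {S : Set (ZMod m × ZMod n)} (hS : IsPerfectCode (torLattice m n) S)
    (hm : 3 ≤ m) (hn : 3 ≤ n) {s : ZMod m × ZMod n} (hs : s ∈ S) (hB : s + e m n (1,-3) ∈ S) :
    s + e m n (3,-2) ∈ S := by
  rcases pair6 hS hm hn hs with ⟨hA, _⟩ | ⟨_, h⟩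
  · exact (conflict hS hm hn s (2,-3) (0,0) (-1,0) (1,0) hA hB (by decide) (by decide)
      (by decide) (ene hm hn _ (by decide)) (Or.inl rfl) (Or.inr tri2)).elim
  · exact h

lemma stepB1 {S : Set (ZMod m × ZMod n)} (hS : IsPerfectCode (torLattice m n) S)
    (hm : 3 ≤ m) (hn : 3 ≤ n) {s : ZMod m × ZMod n} (hs : s ∈ S) (hB : s + e m n (3,-2) ∈ S) :
    s + e m n (2,1) ∈ S := by
  rcases pair1 hS hm hn hs with ⟨hA, _⟩ | ⟨_, h⟩
  · exact (conflict hS hm hn s (3,-1) (0,0) (0,-1) (0,1) hA hB (by decide) (by decide)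
      (by decide) (ene hm hn _ (by decide)) (Or.inl rfl) (Or.inr tri4)).elim
  · exact h

lemma QA_ext1 {S : Set (ZMod m × ZMod n)} (hS : IsPerfectCode (torLattice m n) S)
    (hm : 3 ≤ m) (hn : 3 ≤ n) {s : ZMod m × ZMod n} (h1 : s ∈ S) (h2 : s + e m n (3,-1) ∈ S)
    (h3 : s + e m n (1,2) ∈ S) :
    (s + e m n (3,-1)) + e m n (3,-1) ∈ S ∧ (s + e m n (3,-1)) + e m n (1,2) ∈ S := by
  have hA4 : (s + e m n (3,-1)) + e m n (-3,1) ∈ S := by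
    rw [add_e_e]; norm_num; exact h1
  have hA5 := stepA4 hS hm hn h2 hA4
  have hA6 := stepA5 hS hm hn h2 hA5
  have hA1 := stepA6 hS hm hn h2 hA6
  have hA2 := stepA1 hS hm hn h2 hA1
  exact ⟨hA1, hA2⟩

lemma QA_ext2 {S : Set (ZMod m × ZMod n)} (hS : IsPerfectCode (torLattice m n) S)
    (hm : 3 ≤ m) (hn : 3 ≤ n) {s : ZMod m × ZMod n} (h1 : s ∈ S) (h2 : s + e m n (3,-1) ∈ S)
    (h3 : s + e m n (1,2) ∈ S) :
    (s + e m n (1,2)) + e m n (3,-1) ∈ S ∧ (s + e m n (1,2)) + e m n (1,2) ∈ S := by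
  have hA5 : (s + e m n (1,2)) + e m n (-1,-2) ∈ S := by
    rw [add_e_e]; norm_num; exact h1
  have hA6 := stepA5 hS hm hn h3 hA5
  have hA1 := stepA6 hS hm hn h3 hA6
  have hA2 := stepA1 hS hm hn h3 hA1
  exact ⟨hA1, hA2⟩

lemma QB_ext1 {S : Set (ZMod m × ZMod n)} (hS : IsPerfectCode (torLattice m n) S)
    (hm : 3 ≤ m) (hn : 3 ≤ n) {s : ZMod m × ZMod n} (h1 : s ∈ S) (h2 : s + e m n (3,-2) ∈ S)
    (h3 : s + e m n (2,1) ∈ S) :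
    (s + e m n (3,-2)) + e m n (3,-2) ∈ S ∧ (s + e m n (3,-2)) + e m n (2,1) ∈ S := by
  have hB4 : (s + e m n (3,-2)) + e m n (-3,2) ∈ S := by
    rw [add_e_e]; norm_num; exact h1
  have hB5 := stepB4 hS hm hn h2 hB4
  have hB6 := stepB5 hS hm hn h2 hB5
  have hB1 := stepB6 hS hm hn h2 hB6
  have hB2 := stepB1 hS hm hn h2 hB1
  exact ⟨hB1, hB2⟩

lemma QB_ext2 {S : Set (ZMod m × ZMod n)} (hS : IsPerfectCode (torLattice m n) S)
    (hm : 3 ≤ m) (hn : 3 ≤ n) {s : ZMod m × ZMod n} (h1 : s ∈ S) (h2 : s + e m n (3,-2) ∈ S)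
    (h3 : s + e m n (2,1) ∈ S) :
    (s + e m n (2,1)) + e m n (3,-2) ∈ S ∧ (s + e m n (2,1)) + e m n (2,1) ∈ S := by
  have hB5 : (s + e m n (2,1)) + e m n (-2,-1) ∈ S := by
    rw [add_e_e]; norm_num; exact h1
  have hB6 := stepB5 hS hm hn h3 hB5
  have hB1 := stepB6 hS hm hn h3 hB6
  have hB2 := stepB1 hS hm hn h3 hB1
  exact ⟨hB1, hB2⟩

lemma QA_iter {S : Set (ZMod m × ZMod n)} (hS : IsPerfectCode (torLattice m n) S)
    (hm : 3 ≤ m) (hn : 3 ≤ n) {s : ZMod m × ZMod n} (h1 : s ∈ S) (h2 : s + e m n (3,-1) ∈ S)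
    (h3 : s + e m n (1,2) ∈ S) (k l : ℕ) :
    s + (k • e m n (3,-1) + l • e m n (1,2)) ∈ S ∧
    (s + (k • e m n (3,-1) + l • e m n (1,2))) + e m n (3,-1) ∈ S ∧
    (s + (k • e m n (3,-1) + l • e m n (1,2))) + e m n (1,2) ∈ S := by
  induction l with
  | zero =>
    induction k with
    | zero => simpa using ⟨h1, h2, h3⟩
    | succ k ih =>
      have hE : s + ((k+1) • e m n (3,-1) + 0 • e m n (1,2))
          = (s + (k • e m n (3,-1) + 0 • e m n (1,2))) + e m n (3,-1) := by
        rw [succ_nsmul]; abel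
      have h := QA_ext1 hS hm hn ih.1 ih.2.1 ih.2.2
      refine ⟨by rw [hE]; exact ih.2.1, ?_, ?_⟩
      · rw [hE]; exact h.1
      · rw [hE]; exact h.2
  | succ l ih =>
    have hE : s + (k • e m n (3,-1) + (l+1) • e m n (1,2))
        = (s + (k • e m n (3,-1) + l • e m n (1,2))) + e m n (1,2) := by
      rw [succ_nsmul]; abel
    have h := QA_ext2 hS hm hn ih.1 ih.2.1 ih.2.2
    refine ⟨by rw [hE]; exact ih.2.2, ?_, ?_⟩
    · rw [hE]
      have := QA_ext2 hS hm hn ih.1 ih.2.1 ih.2.2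
      exact this.1
    · rw [hE]
      exact (QA_ext2 hS hm hn ih.1 ih.2.1 ih.2.2).2

lemma QB_iter {S : Set (ZMod m × ZMod n)} (hS : IsPerfectCode (torLattice m n) S)
    (hm : 3 ≤ m) (hn : 3 ≤ n) {s : ZMod m × ZMod n} (h1 : s ∈ S) (h2 : s + e m n (3,-2) ∈ S)
    (h3 : s + e m n (2,1) ∈ S) (k l : ℕ) :
    s + (k • e m n (3,-2) + l • e m n (2,1)) ∈ S ∧
    (s + (k • e m n (3,-2) + l • e m n (2,1))) + e m n (3,-2) ∈ S ∧
    (s + (k • e m n (3,-2) + l • e m n (2,1))) + e m n (2,1) ∈ S := by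
  induction l with
  | zero =>
    induction k with
    | zero => simpa using ⟨h1, h2, h3⟩
    | succ k ih =>
      have hE : s + ((k+1) • e m n (3,-2) + 0 • e m n (2,1))
          = (s + (k • e m n (3,-2) + 0 • e m n (2,1))) + e m n (3,-2) := by
        rw [succ_nsmul]; abel
      have h := QB_ext1 hS hm hn ih.1 ih.2.1 ih.2.2
      exact ⟨by rw [hE]; exact ih.2.1, by rw [hE]; exact h.1, by rw [hE]; exact h.2⟩
  | succ l ih =>
    have hE : s + (k • e m n (3,-2) + (l+1) • e m n (2,1))
        = (s + (k • e m n (3,-2) + l • e m n (2,1))) + e m n (2,1) := by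
      rw [succ_nsmul]; abel
    have h := QB_ext2 hS hm hn ih.1 ih.2.1 ih.2.2
    exact ⟨by rw [hE]; exact ih.2.2, by rw [hE]; exact h.1, by rw [hE]; exact h.2⟩

lemma smul_e (k : ℕ) (d : ℤ × ℤ) : k • e m n d = e m n (k * d.1, k * d.2) := by
  simp only [e, Prod.smul_mk, nsmul_eq_mul, Prod.mk.injEq]
  constructor <;> push_cast <;> ring

lemma comb (k l : ℕ) (a b : ℤ × ℤ) :
    k • e m n a + l • e m n b = e m n (k * a.1 + l * b.1, k * a.2 + l * b.2) := by
  rw [smul_e, smul_e, ← e_add, Prod.mk_add_mk]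

lemma bad1 {S : Set (ZMod m × ZMod n)} (hS : IsPerfectCode (torLattice m n) S)
    (hm : 3 ≤ m) (hn : 3 ≤ n) {s : ZMod m × ZMod n} (hs : s ∈ S)
    (h : s + e m n (1,0) ∈ S) : False :=
  hS.2 s hs _ h (adj_e hm hn s tri1)

lemma bad2 {S : Set (ZMod m × ZMod n)} (hS : IsPerfectCode (torLattice m n) S)
    (hm : 3 ≤ m) (hn : 3 ≤ n) {s : ZMod m × ZMod n} (hs : s ∈ S)
    (h : s + e m n (0,1) ∈ S) : False :=
  hS.2 s hs _ h (adj_e hm hn s tri3)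

lemma key_unit (N : ℕ) (hN : 3 ≤ N) (h7 : ¬ 7 ∣ N) :
    ∃ u : ℕ, u < N ∧ ((7 * u : ℕ) : ZMod N) = 1 := by
  haveI : NeZero N := ⟨by omega⟩
  have hco : Nat.Coprime 7 N := (Nat.Prime.coprime_iff_not_dvd (by norm_num)).mpr h7
  set U := ZMod.unitOfCoprime 7 hco with hU
  refine ⟨((U⁻¹ : (ZMod N)ˣ) : ZMod N).val, ZMod.val_lt _, ?_⟩
  have h1 : ((7 : ℕ) : ZMod N) * ((U⁻¹ : (ZMod N)ˣ) : ZMod N) = 1 := by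
    rw [← ZMod.coe_unitOfCoprime 7 hco]
    exact Units.mul_inv _
  push_cast
  rw [ZMod.natCast_zmod_val]
  exact_mod_cast h1

lemma div_of_code {S : Set (ZMod m × ZMod n)} (hm : 3 ≤ m) (hn : 3 ≤ n)
    (hS : IsPerfectCode (torLattice m n) S) : 7 ∣ m ∧ 7 ∣ n := by
  haveI : NeZero m := ⟨by omega⟩
  haveI : NeZero n := ⟨by omega⟩
  obtain ⟨s, hs⟩ : ∃ s, s ∈ S := by
    rcases cover hS.1 0 with h|h|h|h|h|h|h <;> exact ⟨_, h⟩
  have hnm : n ≤ m * n := Nat.le_mul_of_pos_left n (by omega)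
  have h2nm : 2 * n ≤ m * n := Nat.mul_le_mul_right n (by omega)
  rcases pair1 hS hm hn hs with ⟨hA1, hA2⟩ | ⟨hB1, hB2⟩
  · constructor
    · by_contra h7
      obtain ⟨u, hu, key⟩ := key_unit m hm h7
      have hmem := (QA_iter hS hm hn hs hA1 hA2 (2*u) u).1
      rw [comb] at hmem
      have harg : e m n ((2*u : ℕ) * (3:ℤ) + (u:ℕ) * (1:ℤ), (2*u : ℕ) * (-1:ℤ) + (u:ℕ) * (2:ℤ))
          = e m n (1,0) := by
        simp only [e, Prod.mk.injEq]
        constructor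
        · push_cast at key ⊢; linear_combination key
        · push_cast; ring
      rw [harg] at hmem
      exact bad1 hS hm hn hs hmem
    · by_contra h7
      obtain ⟨u, hu, key⟩ := key_unit n hn h7
      have hule : u ≤ 2 * (m * n) := by omega
      have hmem := (QA_iter hS hm hn hs hA1 hA2 (2*(m*n) - u) (3*u + m*n)).1
      rw [comb] at hmem
      have hm0 : ((m : ℕ) : ZMod m) = 0 := ZMod.natCast_self m
      have harg : e m n (((2*(m*n) - u : ℕ) : ℤ) * 3 + ((3*u + m*n : ℕ) : ℤ) * 1,
          ((2*(m*n) - u : ℕ) : ℤ) * (-1) + ((3*u + m*n : ℕ) : ℤ) * 2) = e m n (0,1) := by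
        simp only [e, Prod.mk.injEq]
        constructor
        · push_cast [hule]
          linear_combination (7 * (n : ZMod m)) * hm0
        · push_cast [hule] at key ⊢
          linear_combination key
      rw [harg] at hmem
      exact bad2 hS hm hn hs hmem
  · constructor
    · by_contra h7
      obtain ⟨u, hu, key⟩ := key_unit m hm h7
      have hmem := (QB_iter hS hm hn hs hB1 hB2 u (2*u)).1
      rw [comb] at hmem
      have harg : e m n ((u:ℕ) * (3:ℤ) + (2*u : ℕ) * (2:ℤ), (u:ℕ) * (-2:ℤ) + (2*u : ℕ) * (1:ℤ))
          = e m n (1,0) := by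
        simp only [e, Prod.mk.injEq]
        constructor
        · push_cast at key ⊢; linear_combination key
        · push_cast; ring
      rw [harg] at hmem
      exact bad1 hS hm hn hs hmem
    · by_contra h7
      obtain ⟨u, hu, key⟩ := key_unit n hn h7
      have hule : 2 * u ≤ m * n := by omega
      have hmem := (QB_iter hS hm hn hs hB1 hB2 (m*n - 2*u) (3*u + 2*(m*n))).1
      rw [comb] at hmem
      have hm0 : ((m : ℕ) : ZMod m) = 0 := ZMod.natCast_self m
      have harg : e m n (((m*n - 2*u : ℕ) : ℤ) * 3 + ((3*u + 2*(m*n) : ℕ) : ℤ) * 2,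
          ((m*n - 2*u : ℕ) : ℤ) * (-2) + ((3*u + 2*(m*n) : ℕ) : ℤ) * 1) = e m n (0,1) := by
        simp only [e, Prod.mk.injEq]
        constructor
        · push_cast [hule]
          linear_combination (7 * (n : ZMod m)) * hm0
        · push_cast [hule] at key ⊢
          linear_combination key
      rw [harg] at hmem
      exact bad2 hS hm hn hs hmem
def dirL : Fin 7 → ℤ × ℤ
  | 0 => (0,0)
  | 1 => (1,0)
  | 2 => (-1,0)
  | 3 => (0,1)
  | 4 => (0,-1)
  | 5 => (1,-1)
  | 6 => (-1,1)

lemma e_eq_zero_imp (hm : 3 ≤ m) (hn : 3 ≤ n) (a b : ℤ × ℤ) (h : e m n (a - b) = 0)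
    (hc : ((a - b).1 ≠ 0 ∧ ((a - b).1).natAbs < 3) ∨ ((a - b).2 ≠ 0 ∧ ((a - b).2).natAbs < 3)) :
    False := ene hm hn _ hc h

lemma card_code (hm : 3 ≤ m) (hn : 3 ≤ n) {S : Set (ZMod m × ZMod n)}
    (hS : IsPerfectCode (torLattice m n) S) : S.ncard = m * n / 7 := by
  haveI : NeZero m := ⟨by omega⟩
  haveI : NeZero n := ⟨by omega⟩
  classical
  have nbr : ∀ (s : ZMod m × ZMod n) (k : Fin 7),
      s + e m n (dirL k) = s ∨ (torLattice m n).Adj (s + e m n (dirL k)) s := by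
    intro s k
    fin_cases k
    · left; simp [dirL]
    · right; simpa [dirL] using (adj_e hm hn s tri1).symm
    · right; simpa [dirL] using (adj_e hm hn s tri2).symm
    · right; simpa [dirL] using (adj_e hm hn s tri3).symm
    · right; simpa [dirL] using (adj_e hm hn s tri4).symm
    · right; simpa [dirL] using (adj_e hm hn s tri5).symm
    · right; simpa [dirL] using (adj_e hm hn s tri6).symm
  let g : ↥S × Fin 7 → ZMod m × ZMod n := fun x => (x.1 : ZMod m × ZMod n) + e m n (dirL x.2)
  have hsurj : Function.Surjective g := by
    intro v
    rcases cover hS.1 v with h|h|h|h|h|h|h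
    · exact ⟨⟨⟨v, h⟩, 0⟩, by simp [g, dirL]⟩
    · exact ⟨⟨⟨v + e m n (1,0), h⟩, 2⟩, by norm_num [g, dirL, add_e_e, Prod.mk_add_mk]⟩
    · exact ⟨⟨⟨v + e m n (-1,0), h⟩, 1⟩, by norm_num [g, dirL, add_e_e, Prod.mk_add_mk]⟩
    · exact ⟨⟨⟨v + e m n (0,1), h⟩, 4⟩, by norm_num [g, dirL, add_e_e, Prod.mk_add_mk]⟩
    · exact ⟨⟨⟨v + e m n (0,-1), h⟩, 3⟩, by norm_num [g, dirL, add_e_e, Prod.mk_add_mk]⟩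
    · exact ⟨⟨⟨v + e m n (1,-1), h⟩, 6⟩, by norm_num [g, dirL, add_e_e, Prod.mk_add_mk]⟩
    · exact ⟨⟨⟨v + e m n (-1,1), h⟩, 5⟩, by norm_num [g, dirL, add_e_e, Prod.mk_add_mk]⟩
  have hinj : Function.Injective g := by
    rintro ⟨⟨s₁, hs₁⟩, k₁⟩ ⟨⟨s₂, hs₂⟩, k₂⟩ heq
    simp only [g] at heq
    have hss : s₁ = s₂ := by
      by_contra hne
      have h2 := nbr s₂ k₂
      rw [← heq] at h2
      exact no_close hS hs₁ hs₂ hne (nbr s₁ k₁) h2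
    subst hss
    have hdd : e m n (dirL k₁) = e m n (dirL k₂) := add_left_cancel heq
    have h0 : e m n (dirL k₁ - dirL k₂) = 0 := by rw [e_sub, hdd, sub_self]
    have hk : k₁ = k₂ := by
      fin_cases k₁ <;> fin_cases k₂ <;>
        first
          | rfl
          | exact (e_eq_zero_imp hm hn _ _ h0 (by decide)).elim
    exact Prod.ext_iff.mpr ⟨Subtype.ext rfl, hk⟩
  have hcard := Nat.card_eq_of_bijective g ⟨hinj, hsurj⟩
  rw [Nat.card_prod, Nat.card_prod, Nat.card_zmod, Nat.card_zmod,
    Nat.card_coe_set_eq, show Nat.card (Fin 7) = 7 by simp] at hcard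
  omega
def cmap (hm7 : 7 ∣ m) (hn7 : 7 ∣ n) (p : ZMod m × ZMod n) : ZMod 7 :=
  ZMod.castHom hm7 (ZMod 7) p.1 + 3 * ZMod.castHom hn7 (ZMod 7) p.2

lemma cmap_add (hm7 : 7 ∣ m) (hn7 : 7 ∣ n) (p q : ZMod m × ZMod n) :
    cmap hm7 hn7 (p + q) = cmap hm7 hn7 p + cmap hm7 hn7 q := by
  simp only [cmap, Prod.fst_add, Prod.snd_add, map_add]; ring

lemma cmap_sub (hm7 : 7 ∣ m) (hn7 : 7 ∣ n) (p q : ZMod m × ZMod n) :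
    cmap hm7 hn7 (p - q) = cmap hm7 hn7 p - cmap hm7 hn7 q := by
  simp only [cmap, Prod.fst_sub, Prod.snd_sub, map_sub]; ring

lemma cmap_e (hm7 : 7 ∣ m) (hn7 : 7 ∣ n) (d : ℤ × ℤ) :
    cmap hm7 hn7 (e m n d) = ((d.1 + 3 * d.2 : ℤ) : ZMod 7) := by
  simp only [cmap, e, map_intCast]; push_cast; ring

lemma psi_surj (x : ZMod 7) (hx : x ≠ 0) :
    ∃ d ∈ triDirs, ((d.1 + 3 * d.2 : ℤ) : ZMod 7) = x := by
  fin_cases x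
  · exact absurd rfl hx
  · exact ⟨(1,0), tri1, by rfl⟩
  · exact ⟨(-1,1), tri6, by rfl⟩
  · exact ⟨(0,1), tri3, by rfl⟩
  · exact ⟨(0,-1), tri4, by rfl⟩
  · exact ⟨(1,-1), tri5, by rfl⟩
  · exact ⟨(-1,0), tri2, by rfl⟩

lemma psi_ne {d : ℤ × ℤ} (hd : d ∈ triDirs) : ((d.1 + 3 * d.2 : ℤ) : ZMod 7) ≠ 0 := by
  simp only [triDirs, Set.mem_insert_iff, Set.mem_singleton_iff] at hd
  rcases hd with rfl|rfl|rfl|rfl|rfl|rfl <;> decide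

lemma psi_inj {d d' : ℤ × ℤ} (hd : d ∈ triDirs) (hd' : d' ∈ triDirs)
    (h : ((d.1 + 3 * d.2 : ℤ) : ZMod 7) = ((d'.1 + 3 * d'.2 : ℤ) : ZMod 7)) : d = d' := by
  simp only [triDirs, Set.mem_insert_iff, Set.mem_singleton_iff] at hd hd'
  rcases hd with rfl|rfl|rfl|rfl|rfl|rfl <;> rcases hd' with rfl|rfl|rfl|rfl|rfl|rfl <;>
    first
      | rfl
      | (exfalso; revert h; decide)

lemma code_perfect (hm : 3 ≤ m) (hn : 3 ≤ n) (hm7 : 7 ∣ m) (hn7 : 7 ∣ n) (i : Fin 7) :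
    IsPerfectCode (torLattice m n) {p | cmap hm7 hn7 p = ((i : ℕ) : ZMod 7)} := by
  constructor
  · intro v hv
    simp only [Set.mem_setOf_eq] at hv
    have hδ : ((i : ℕ) : ZMod 7) - cmap hm7 hn7 v ≠ 0 := sub_ne_zero.mpr (Ne.symm hv)
    obtain ⟨d, hd, hψ⟩ := psi_surj _ hδ
    refine ⟨v + e m n d, ⟨?_, adj_e hm hn v hd⟩, ?_⟩
    · show cmap hm7 hn7 (v + e m n d) = _
      rw [cmap_add, cmap_e, hψ]; ring
    · rintro y ⟨hy, hyadj⟩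
      obtain ⟨d', hd', rfl⟩ := adj_form hyadj
      simp only [Set.mem_setOf_eq] at hy
      rw [cmap_add, cmap_e] at hy
      have h1 : ((d'.1 + 3 * d'.2 : ℤ) : ZMod 7) = ((d.1 + 3 * d.2 : ℤ) : ZMod 7) := by
        rw [hψ]; linear_combination hy
      rw [psi_inj hd' hd h1]
  · intro a ha b hb hadj
    obtain ⟨d, hd, rfl⟩ := adj_form hadj
    simp only [Set.mem_setOf_eq] at ha hb
    rw [cmap_add, cmap_e, ha] at hb
    exact psi_ne hd (by linear_combination hb)

lemma partition_exists (hm : 3 ≤ m) (hn : 3 ≤ n) (hm7 : 7 ∣ m) (hn7 : 7 ∣ n) :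
    ∃ S : Fin 7 → Set (ZMod m × ZMod n),
      (Pairwise fun i j => Disjoint (S i) (S j)) ∧
      (⋃ i, S i) = Set.univ ∧
      (∀ i, IsPerfectCode (torLattice m n) (S i)) ∧
      (∀ i j, ∃ t : ZMod m × ZMod n, S j = (fun p => p + t) '' S i) := by
  refine ⟨fun i => {p | cmap hm7 hn7 p = ((i : ℕ) : ZMod 7)}, ?_, ?_,
    fun i => code_perfect hm hn hm7 hn7 i, ?_⟩
  · intro i j hij
    rw [Set.disjoint_left]
    intro p hp hq
    simp only [Set.mem_setOf_eq] at hp hq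
    apply hij
    apply Fin.ext
    have : (((i : ℕ) : ZMod 7)).val = (((j : ℕ) : ZMod 7)).val := by rw [hp] at hq; rw [hq]
    rwa [ZMod.val_cast_of_lt i.isLt, ZMod.val_cast_of_lt j.isLt] at this
  · ext p
    simp only [Set.mem_iUnion, Set.mem_setOf_eq, Set.mem_univ, iff_true]
    exact ⟨⟨(cmap hm7 hn7 p).val, ZMod.val_lt _⟩, by simp [ZMod.natCast_zmod_val]⟩
  · intro i j
    refine ⟨e m n (((j : ℕ) : ℤ) - ((i : ℕ) : ℤ), 0), ?_⟩
    have hct : cmap hm7 hn7 (e m n (((j : ℕ) : ℤ) - ((i : ℕ) : ℤ), 0))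
        = ((j : ℕ) : ZMod 7) - ((i : ℕ) : ZMod 7) := by
      rw [cmap_e]; push_cast; ring
    ext q
    simp only [Set.mem_image, Set.mem_setOf_eq]
    constructor
    · intro hq
      refine ⟨q - e m n (((j : ℕ) : ℤ) - ((i : ℕ) : ℤ), 0), ?_, sub_add_cancel _ _⟩
      rw [cmap_sub, hq, hct]; ring
    · rintro ⟨p, hp, rfl⟩
      rw [cmap_add, hp, hct]; ring
end TorAux

/-- The toroidal triangular lattice `Δ_{m,n}` admits a partition of its vertex set
into seven 1-perfect codes iff `7 ∣ m` and `7 ∣ n`; in that case the codes can be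
chosen to be translates of one another, and every 1-perfect code has `m·n/7`
elements. -/
theorem toroidal_perfect_code_partition (m n : ℕ) (hm : 3 ≤ m) (hn : 3 ≤ n) :
    ((∃ S : Fin 7 → Set (ZMod m × ZMod n),
        (Pairwise fun i j => Disjoint (S i) (S j)) ∧
        (⋃ i, S i) = Set.univ ∧
        ∀ i, IsPerfectCode (torLattice m n) (S i)) ↔ (7 ∣ m ∧ 7 ∣ n)) ∧
    (7 ∣ m → 7 ∣ n →
      (∃ S : Fin 7 → Set (ZMod m × ZMod n),
        (Pairwise fun i j => Disjoint (S i) (S j)) ∧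
        (⋃ i, S i) = Set.univ ∧
        (∀ i, IsPerfectCode (torLattice m n) (S i)) ∧
        (∀ i j, ∃ t : ZMod m × ZMod n, S j = (fun p => p + t) '' S i)) ∧
      (∀ S : Set (ZMod m × ZMod n), IsPerfectCode (torLattice m n) S →
        S.ncard = m * n / 7)) := by
  constructor
  · constructor
    · rintro ⟨S, hdis, hcov, hcode⟩
      exact TorAux.div_of_code hm hn (hcode 0)
    · rintro ⟨hm7, hn7⟩
      obtain ⟨S, h1, h2, h3, h4⟩ := TorAux.partition_exists hm hn hm7 hn7
      exact ⟨S, h1, h2, h3⟩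
  · intro hm7 hn7
    exact ⟨TorAux.partition_exists hm hn hm7 hn7,
      fun S hS => TorAux.card_code hm hn hS⟩
end

section
/- The set S₂ = {(x,y) ∈ ℤ × ℤ : 3 divides y} is a proper semiperfect dominating set of the triangular lattice Δ; every vertex of S₂ is adjacent to exactly two vertices of S₂ (so S₂ has no isolated vertices in the induced subgraph); the subgraph of Δ induced on the complement of S₂ is 4-regular and disconnected; and any two vertices of S₂ lying in distinct connected components of the subgraph induced on S₂ are at graph distance at least 3 in Δ, with some such pair at distance exactly 3. -/
open SimpleGraph Set

/-- The set of points whose second coordinate is divisible by 3. -/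
def spdsTwo : Set (ℤ × ℤ) := {p | (3 : ℤ) ∣ p.2}



lemma tri_adj_iff {u v : ℤ × ℤ} : triLattice.Adj u v ↔
    (v.2 = u.2 ∧ (v.1 = u.1 + 1 ∨ v.1 = u.1 - 1)) ∨
    (v.2 = u.2 + 1 ∧ (v.1 = u.1 ∨ v.1 = u.1 - 1)) ∨
    (v.2 = u.2 - 1 ∧ (v.1 = u.1 ∨ v.1 = u.1 + 1)) := by
  simp only [triLattice, triDirs, fromRel_adj, Set.mem_insert_iff, Set.mem_singleton_iff,
    Prod.ext_iff, Prod.fst_sub, Prod.snd_sub, ne_eq, Prod.mk.injEq]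
  omega


lemma mem_spdsTwo {p : ℤ × ℤ} : p ∈ spdsTwo ↔ (3 : ℤ) ∣ p.2 := Iff.rfl

lemma key1 (v : ℤ × ℤ) (h : v.2 % 3 = 1) :
    {u | u ∈ spdsTwo ∧ triLattice.Adj v u} = {(v.1, v.2 - 1), (v.1 + 1, v.2 - 1)} := by
  ext u
  simp only [Set.mem_setOf_eq, mem_spdsTwo, tri_adj_iff, Set.mem_insert_iff,
    Set.mem_singleton_iff, Prod.ext_iff]
  omega

lemma key2 (v : ℤ × ℤ) (h : v.2 % 3 = 2) :
    {u | u ∈ spdsTwo ∧ triLattice.Adj v u} = {(v.1, v.2 + 1), (v.1 - 1, v.2 + 1)} := by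
  ext u
  simp only [Set.mem_setOf_eq, mem_spdsTwo, tri_adj_iff, Set.mem_insert_iff,
    Set.mem_singleton_iff, Prod.ext_iff]
  omega

lemma key0 (v : ℤ × ℤ) (h : v.2 % 3 = 0) :
    {u | u ∈ spdsTwo ∧ triLattice.Adj v u} = {(v.1 - 1, v.2), (v.1 + 1, v.2)} := by
  ext u
  simp only [Set.mem_setOf_eq, mem_spdsTwo, tri_adj_iff, Set.mem_insert_iff,
    Set.mem_singleton_iff, Prod.ext_iff]
  omega

lemma ncard_in_nbrs (v : ℤ × ℤ) : {u | u ∈ spdsTwo ∧ triLattice.Adj v u}.ncard = 2 := by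
  have h3 : v.2 % 3 = 0 ∨ v.2 % 3 = 1 ∨ v.2 % 3 = 2 := by omega
  rcases h3 with h | h | h
  · rw [key0 v h]; exact Set.ncard_pair (fun he => by rw [Prod.ext_iff] at he; omega)
  · rw [key1 v h]; exact Set.ncard_pair (fun he => by rw [Prod.ext_iff] at he; omega)
  · rw [key2 v h]; exact Set.ncard_pair (fun he => by rw [Prod.ext_iff] at he; omega)

lemma ncard_four {a b c d : ℤ × ℤ} (hab : a ≠ b) (hac : a ≠ c) (had : a ≠ d)
    (hbc : b ≠ c) (hbd : b ≠ d) (hcd : c ≠ d) : ({a, b, c, d} : Set (ℤ × ℤ)).ncard = 4 := by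
  rw [Set.ncard_insert_of_notMem (by simp [hab, hac, had]),
    Set.ncard_insert_of_notMem (by simp [hbc, hbd]), Set.ncard_pair hcd]

lemma tri_reachable (p q : ℤ × ℤ) : triLattice.Reachable p q := by
  have key : ∀ n : ℕ, ∀ p q : ℤ × ℤ, (q.1 - p.1).natAbs + (q.2 - p.2).natAbs = n →
      triLattice.Reachable p q := by
    intro n
    induction n with
    | zero =>
      intro p q h
      have : p = q := Prod.ext (by omega) (by omega)
      subst this; rfl
    | succ n ih =>
      intro p q h
      rcases lt_trichotomy p.1 q.1 with h1 | h1 | h1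
      · exact (Adj.reachable (tri_adj_iff.mpr (by omega))).trans
          (ih (p.1 + 1, p.2) q (by simp; omega))
      · rcases lt_trichotomy p.2 q.2 with h2 | h2 | h2
        · exact (Adj.reachable (tri_adj_iff.mpr (by omega))).trans
            (ih (p.1, p.2 + 1) q (by simp; omega))
        · omega
        · exact (Adj.reachable (tri_adj_iff.mpr (by omega))).trans
            (ih (p.1, p.2 - 1) q (by simp; omega))
      · exact (Adj.reachable (tri_adj_iff.mpr (by omega))).trans
          (ih (p.1 - 1, p.2) q (by simp; omega))
  exact key _ p q rfl

lemma walk_len_ge {p q : ℤ × ℤ} (w : triLattice.Walk p q) :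
    (q.2 - p.2).natAbs ≤ w.length := by
  induction w with
  | nil => simp
  | cons h w ih =>
    have := tri_adj_iff.mp h
    simp only [SimpleGraph.Walk.length_cons]
    omega

lemma comp_walk_inv {a b : ↥(spdsTwoᶜ)} (w : (triLattice.induce spdsTwoᶜ).Walk a b) :
    a.val.2 / 3 = b.val.2 / 3 := by
  induction w with
  | nil => rfl
  | @cons u m v h w ih =>
    have h1 : triLattice.Adj u.val m.val := h
    have h2 := tri_adj_iff.mp h1
    have hu : ¬ (3 : ℤ) ∣ u.val.2 := u.2
    have hm : ¬ (3 : ℤ) ∣ m.val.2 := m.2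
    omega

lemma s_walk_inv {a b : ↥spdsTwo} (w : (triLattice.induce spdsTwo).Walk a b) :
    a.val.2 = b.val.2 := by
  induction w with
  | nil => rfl
  | @cons u m v h w ih =>
    have h1 : triLattice.Adj u.val m.val := h
    have h2 := tri_adj_iff.mp h1
    have hu : (3 : ℤ) ∣ u.val.2 := u.2
    have hm : (3 : ℤ) ∣ m.val.2 := m.2
    omega

lemma row_reach (a b : ↥spdsTwo) (hy : a.val.2 = b.val.2) :
    (triLattice.induce spdsTwo).Reachable a b := by
  have key : ∀ n : ℕ, ∀ a b : ↥spdsTwo, a.val.2 = b.val.2 →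
      (b.val.1 - a.val.1).natAbs = n → (triLattice.induce spdsTwo).Reachable a b := by
    intro n
    induction n with
    | zero =>
      intro a b hy h
      have : a = b := Subtype.ext (Prod.ext (by omega) hy)
      subst this; rfl
    | succ n ih =>
      intro a b hy h
      rcases lt_trichotomy a.val.1 b.val.1 with h1 | h1 | h1
      · refine (Adj.reachable (u := a) (v := ⟨(a.val.1 + 1, a.val.2), a.2⟩)
          ?_).trans (ih _ b (by simpa using hy) (by simp; omega))
        show triLattice.Adj a.val _
        exact tri_adj_iff.mpr (by simp)
      · omega
      · refine (Adj.reachable (u := a) (v := ⟨(a.val.1 - 1, a.val.2), a.2⟩)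
          ?_).trans (ih _ b (by simpa using hy) (by simp; omega))
        show triLattice.Adj a.val _
        exact tri_adj_iff.mpr (by simp)
  exact key _ a b hy rfl

lemma dist_ge_three {a b : ℤ × ℤ} (ha : a ∈ spdsTwo) (hb : b ∈ spdsTwo)
    (hy : a.2 ≠ b.2) : 3 ≤ triLattice.dist a b := by
  obtain ⟨w, hw⟩ := (tri_reachable a b).exists_walk_length_eq_dist
  have := walk_len_ge w
  have h3 : (3 : ℕ) ≤ (b.2 - a.2).natAbs := by
    obtain ⟨k, hk⟩ := ha; obtain ⟨l, hl⟩ := hb; omega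
  omega

lemma comp_nbr (v : ↥(spdsTwoᶜ)) :
    ((triLattice.induce spdsTwoᶜ).neighborSet v).ncard = 4 := by
  rw [← Set.ncard_image_of_injOn Subtype.val_injective.injOn]
  have himg : Subtype.val '' ((triLattice.induce spdsTwoᶜ).neighborSet v)
      = {u | u ∈ spdsTwoᶜ ∧ triLattice.Adj v.val u} := by
    ext u
    constructor
    · rintro ⟨w, hw, rfl⟩; exact ⟨w.2, hw⟩
    · rintro ⟨hu, hadj⟩; exact ⟨⟨u, hu⟩, hadj, rfl⟩
  rw [himg]
  have hv : ¬ (3 : ℤ) ∣ v.val.2 := v.2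
  have h3 : v.val.2 % 3 = 1 ∨ v.val.2 % 3 = 2 := by omega
  rcases h3 with h | h
  · have he : {u | u ∈ spdsTwoᶜ ∧ triLattice.Adj v.val u} =
        {(v.val.1 + 1, v.val.2), (v.val.1 - 1, v.val.2),
         (v.val.1, v.val.2 + 1), (v.val.1 - 1, v.val.2 + 1)} := by
      ext u
      simp only [Set.mem_setOf_eq, Set.mem_compl_iff, mem_spdsTwo, tri_adj_iff,
        Set.mem_insert_iff, Set.mem_singleton_iff, Prod.ext_iff]
      omega
    rw [he]
    apply ncard_four <;> (intro heq; rw [Prod.ext_iff] at heq; omega)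
  · have he : {u | u ∈ spdsTwoᶜ ∧ triLattice.Adj v.val u} =
        {(v.val.1 + 1, v.val.2), (v.val.1 - 1, v.val.2),
         (v.val.1, v.val.2 - 1), (v.val.1 + 1, v.val.2 - 1)} := by
      ext u
      simp only [Set.mem_setOf_eq, Set.mem_compl_iff, mem_spdsTwo, tri_adj_iff,
        Set.mem_insert_iff, Set.mem_singleton_iff, Prod.ext_iff]
      omega
    rw [he]
    apply ncard_four <;> (intro heq; rw [Prod.ext_iff] at heq; omega)

/-- `spdsTwo` is a proper SPDS of the triangular lattice; every vertex of it has
exactly two neighbours inside it; the subgraph induced on its complement is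
4-regular and disconnected; and vertices of `spdsTwo` in distinct induced
components are at distance at least 3, with some pair at distance exactly 3. -/
theorem nonisolated_SPDS_properties :
    (IsSPDS triLattice spdsTwo ∧ spdsTwo ≠ Set.univ) ∧
    (∀ v ∈ spdsTwo, {u | u ∈ spdsTwo ∧ triLattice.Adj v u}.ncard = 2) ∧
    (∀ v : ↥(spdsTwoᶜ), ((triLattice.induce spdsTwoᶜ).neighborSet v).ncard = 4) ∧
    ¬ (triLattice.induce spdsTwoᶜ).Connected ∧
    (∀ (a : ℤ × ℤ) (ha : a ∈ spdsTwo) (b : ℤ × ℤ) (hb : b ∈ spdsTwo),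
      ¬ (triLattice.induce spdsTwo).Reachable ⟨a, ha⟩ ⟨b, hb⟩ →
        3 ≤ triLattice.dist a b) ∧
    (∃ (a : ℤ × ℤ) (ha : a ∈ spdsTwo) (b : ℤ × ℤ) (hb : b ∈ spdsTwo),
      ¬ (triLattice.induce spdsTwo).Reachable ⟨a, ha⟩ ⟨b, hb⟩ ∧
        triLattice.dist a b = 3) := by
  have h01 : ((0 : ℤ), (1 : ℤ)) ∈ spdsTwoᶜ := by
    intro h; obtain ⟨k, hk⟩ := h; omega
  have h04 : ((0 : ℤ), (4 : ℤ)) ∈ spdsTwoᶜ := by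
    intro h; obtain ⟨k, hk⟩ := h; omega
  have h00 : ((0 : ℤ), (0 : ℤ)) ∈ spdsTwo := ⟨0, by norm_num⟩
  have h03 : ((0 : ℤ), (3 : ℤ)) ∈ spdsTwo := ⟨1, by norm_num⟩
  refine ⟨⟨fun v _ => ncard_in_nbrs v, ?_⟩, fun v _ => ncard_in_nbrs v, comp_nbr, ?_, ?_, ?_⟩
  · intro h
    exact h01 (h ▸ Set.mem_univ _)
  · intro hc
    obtain ⟨w⟩ := hc.preconnected ⟨((0 : ℤ), (1 : ℤ)), h01⟩ ⟨((0 : ℤ), (4 : ℤ)), h04⟩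
    have := comp_walk_inv w
    norm_num at this
  · intro a ha b hb hnr
    have hy : a.2 ≠ b.2 := fun h => hnr (row_reach ⟨a, ha⟩ ⟨b, hb⟩ h)
    exact dist_ge_three ha hb hy
  · refine ⟨(0, 0), h00, (0, 3), h03, ?_, ?_⟩
    · intro hr
      obtain ⟨w⟩ := hr
      have := s_walk_inv w
      norm_num at this
    · refine le_antisymm ?_ (dist_ge_three h00 h03 (by norm_num))
      have a1 : triLattice.Adj ((0 : ℤ), (0 : ℤ)) ((0 : ℤ), (1 : ℤ)) :=
        tri_adj_iff.mpr (by norm_num)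
      have a2 : triLattice.Adj ((0 : ℤ), (1 : ℤ)) ((0 : ℤ), (2 : ℤ)) :=
        tri_adj_iff.mpr (by norm_num)
      have a3 : triLattice.Adj ((0 : ℤ), (2 : ℤ)) ((0 : ℤ), (3 : ℤ)) :=
        tri_adj_iff.mpr (by norm_num)
      exact (SimpleGraph.dist_le (SimpleGraph.Walk.cons a1
        (SimpleGraph.Walk.cons a2 (SimpleGraph.Walk.cons a3 SimpleGraph.Walk.nil)))).trans_eq
        (by simp)
end

section
/- For all integers m, n ≥ 2, the toroidal triangular lattice Δ_{2m,2n} contains a proper semiperfect dominating set that is an independent set. -/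
open SimpleGraph Set

lemma triDirs_neg {d : ℤ × ℤ} (hd : d ∈ triDirs) : -d ∈ triDirs := by
  simp only [triDirs, Set.mem_insert_iff, Set.mem_singleton_iff] at hd ⊢
  rcases hd with rfl|rfl|rfl|rfl|rfl|rfl <;> simp [Prod.ext_iff]

lemma tor_adj_iff {N M : ℕ} (hN : 3 ≤ N) (hM : 3 ≤ M) (v u : ZMod N × ZMod M) :
    (torLattice N M).Adj v u ↔
      ∃ d ∈ triDirs, u = v + ((d.1 : ZMod N), (d.2 : ZMod M)) := by
  haveI : Fact (1 < N) := ⟨by omega⟩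
  haveI : Fact (1 < M) := ⟨by omega⟩
  rw [torLattice, SimpleGraph.fromRel_adj]
  constructor
  · rintro ⟨hne, h | h⟩
    · obtain ⟨d, hd, hvu⟩ := h
      refine ⟨-d, triDirs_neg hd, ?_⟩
      have hu : u = v - (((d.1 : ℤ) : ZMod N), ((d.2 : ℤ) : ZMod M)) := by
        rw [← hvu]; ring
      rw [hu]
      simp [Prod.ext_iff, sub_eq_add_neg]
    · obtain ⟨d, hd, hvu⟩ := h
      refine ⟨d, hd, ?_⟩
      rw [← hvu]; ring
  · rintro ⟨d, hd, rfl⟩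
    refine ⟨?_, Or.inr ⟨d, hd, by ring⟩⟩
    intro h
    have h0 : (((d.1 : ℤ) : ZMod N), ((d.2 : ℤ) : ZMod M)) = 0 := by
      have := h.symm
      rwa [add_eq_left] at this
    simp only [triDirs, Set.mem_insert_iff, Set.mem_singleton_iff] at hd
    rcases hd with rfl|rfl|rfl|rfl|rfl|rfl <;>
      simp [Prod.ext_iff, neg_eq_zero] at h0

/-- For all `m, n ≥ 2`, the toroidal triangular lattice `Δ_{2m,2n}` contains a
proper semiperfect dominating set that is an independent set. -/
theorem toroidal_isolated_SPDS (m n : ℕ) (hm : 2 ≤ m) (hn : 2 ≤ n) :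
    ∃ S : Set (ZMod (2 * m) × ZMod (2 * n)),
      IsSPDS (torLattice (2 * m) (2 * n)) S ∧ S ≠ Set.univ ∧
      IsIndep (torLattice (2 * m) (2 * n)) S := by
  have hN : 3 ≤ 2 * m := by omega
  have hM : 3 ≤ 2 * n := by omega
  haveI : Fact (1 < 2 * m) := ⟨by omega⟩
  haveI : Fact (1 < 2 * n) := ⟨by omega⟩
  let π₁ : ZMod (2 * m) →+* ZMod 2 := ZMod.castHom ⟨m, rfl⟩ (ZMod 2)
  let π₂ : ZMod (2 * n) →+* ZMod 2 := ZMod.castHom ⟨n, rfl⟩ (ZMod 2)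
  have h2 : ∀ x : ZMod 2, x = 0 ∨ x = 1 := by decide
  have hone : (1 : ZMod (2 * m)) ≠ -1 := by
    intro h
    have h2 : ((2 : ℕ) : ZMod (2 * m)) = 0 := by
      push_cast
      linear_combination h
    rw [ZMod.natCast_eq_zero_iff] at h2
    have := Nat.le_of_dvd (by norm_num) h2
    omega
  have hone' : (1 : ZMod (2 * n)) ≠ -1 := by
    intro h
    have h2 : ((2 : ℕ) : ZMod (2 * n)) = 0 := by
      push_cast
      linear_combination h
    rw [ZMod.natCast_eq_zero_iff] at h2
    have := Nat.le_of_dvd (by norm_num) h2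
    omega
  refine ⟨{p | π₁ p.1 = 0 ∧ π₂ p.2 = 0}, ?_, ?_, ?_⟩
  · -- SPDS
    intro v hv
    simp only [Set.mem_setOf_eq] at hv
    rcases h2 (π₁ v.1) with ha|ha <;> rcases h2 (π₂ v.2) with hb|hb
    · exact absurd ⟨ha, hb⟩ hv
    · -- parity (0,1) : vertical neighbors
      have hset : {u | u ∈ {p : ZMod (2*m) × ZMod (2*n) | π₁ p.1 = 0 ∧ π₂ p.2 = 0} ∧
          (torLattice (2*m) (2*n)).Adj v u} =
          {v + (((0:ℤ) : ZMod (2*m)), ((1:ℤ) : ZMod (2*n))),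
           v + (((0:ℤ) : ZMod (2*m)), ((-1:ℤ) : ZMod (2*n)))} := by
        ext u
        simp only [Set.mem_setOf_eq, tor_adj_iff hN hM, Set.mem_insert_iff,
          Set.mem_singleton_iff]
        constructor
        · rintro ⟨⟨h1, hh2⟩, d, hd, rfl⟩
          simp only [triDirs, Set.mem_insert_iff, Set.mem_singleton_iff] at hd
          rcases hd with rfl|rfl|rfl|rfl|rfl|rfl <;>
            simp only [Prod.fst_add, Prod.snd_add, map_add, map_intCast, map_one,
              map_zero, map_neg, ha, hb, Int.cast_one, Int.cast_zero, Int.cast_neg]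
              at h1 hh2 <;>
            first
              | (exact absurd h1 (by decide))
              | (exact absurd hh2 (by decide))
              | (left; rfl)
              | (right; rfl)
        · rintro (rfl|rfl)
          · refine ⟨⟨?_, ?_⟩, ((0,1) : ℤ × ℤ), by norm_num [triDirs], rfl⟩ <;>
            · simp only [Prod.fst_add, Prod.snd_add, map_add, map_intCast, map_one,
                map_zero, map_neg, ha, hb, Int.cast_one, Int.cast_zero, Int.cast_neg]
              decide
          · refine ⟨⟨?_, ?_⟩, ((0,-1) : ℤ × ℤ), by norm_num [triDirs], rfl⟩ <;>
            · simp only [Prod.fst_add, Prod.snd_add, map_add, map_intCast, map_one,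
                map_zero, map_neg, ha, hb, Int.cast_one, Int.cast_zero, Int.cast_neg]
              decide
      rw [hset, Set.ncard_pair]
      intro h
      rw [add_right_inj, Prod.ext_iff] at h
      exact hone' (by simpa using h.2)
    · -- parity (1,0) : horizontal neighbors
      have hset : {u | u ∈ {p : ZMod (2*m) × ZMod (2*n) | π₁ p.1 = 0 ∧ π₂ p.2 = 0} ∧
          (torLattice (2*m) (2*n)).Adj v u} =
          {v + (((1:ℤ) : ZMod (2*m)), ((0:ℤ) : ZMod (2*n))),
           v + (((-1:ℤ) : ZMod (2*m)), ((0:ℤ) : ZMod (2*n)))} := by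
        ext u
        simp only [Set.mem_setOf_eq, tor_adj_iff hN hM, Set.mem_insert_iff,
          Set.mem_singleton_iff]
        constructor
        · rintro ⟨⟨h1, hh2⟩, d, hd, rfl⟩
          simp only [triDirs, Set.mem_insert_iff, Set.mem_singleton_iff] at hd
          rcases hd with rfl|rfl|rfl|rfl|rfl|rfl <;>
            simp only [Prod.fst_add, Prod.snd_add, map_add, map_intCast, map_one,
              map_zero, map_neg, ha, hb, Int.cast_one, Int.cast_zero, Int.cast_neg]
              at h1 hh2 <;>
            first
              | (exact absurd h1 (by decide))
              | (exact absurd hh2 (by decide))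
              | (left; rfl)
              | (right; rfl)
        · rintro (rfl|rfl)
          · refine ⟨⟨?_, ?_⟩, ((1,0) : ℤ × ℤ), by norm_num [triDirs], rfl⟩ <;>
            · simp only [Prod.fst_add, Prod.snd_add, map_add, map_intCast, map_one,
                map_zero, map_neg, ha, hb, Int.cast_one, Int.cast_zero, Int.cast_neg]
              decide
          · refine ⟨⟨?_, ?_⟩, ((-1,0) : ℤ × ℤ), by norm_num [triDirs], rfl⟩ <;>
            · simp only [Prod.fst_add, Prod.snd_add, map_add, map_intCast, map_one,
                map_zero, map_neg, ha, hb, Int.cast_one, Int.cast_zero, Int.cast_neg]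
              decide
      rw [hset, Set.ncard_pair]
      intro h
      rw [add_right_inj, Prod.ext_iff] at h
      exact hone (by simpa using h.1)
    · -- parity (1,1) : diagonal neighbors
      have hset : {u | u ∈ {p : ZMod (2*m) × ZMod (2*n) | π₁ p.1 = 0 ∧ π₂ p.2 = 0} ∧
          (torLattice (2*m) (2*n)).Adj v u} =
          {v + (((1:ℤ) : ZMod (2*m)), ((-1:ℤ) : ZMod (2*n))),
           v + (((-1:ℤ) : ZMod (2*m)), ((1:ℤ) : ZMod (2*n)))} := by
        ext u
        simp only [Set.mem_setOf_eq, tor_adj_iff hN hM, Set.mem_insert_iff,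
          Set.mem_singleton_iff]
        constructor
        · rintro ⟨⟨h1, hh2⟩, d, hd, rfl⟩
          simp only [triDirs, Set.mem_insert_iff, Set.mem_singleton_iff] at hd
          rcases hd with rfl|rfl|rfl|rfl|rfl|rfl <;>
            simp only [Prod.fst_add, Prod.snd_add, map_add, map_intCast, map_one,
              map_zero, map_neg, ha, hb, Int.cast_one, Int.cast_zero, Int.cast_neg]
              at h1 hh2 <;>
            first
              | (exact absurd h1 (by decide))
              | (exact absurd hh2 (by decide))
              | (left; rfl)
              | (right; rfl)
        · rintro (rfl|rfl)
          · refine ⟨⟨?_, ?_⟩, ((1,-1) : ℤ × ℤ), by norm_num [triDirs], rfl⟩ <;>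
            · simp only [Prod.fst_add, Prod.snd_add, map_add, map_intCast, map_one,
                map_zero, map_neg, ha, hb, Int.cast_one, Int.cast_zero, Int.cast_neg]
              decide
          · refine ⟨⟨?_, ?_⟩, ((-1,1) : ℤ × ℤ), by norm_num [triDirs], rfl⟩ <;>
            · simp only [Prod.fst_add, Prod.snd_add, map_add, map_intCast, map_one,
                map_zero, map_neg, ha, hb, Int.cast_one, Int.cast_zero, Int.cast_neg]
              decide
      rw [hset, Set.ncard_pair]
      intro h
      rw [add_right_inj, Prod.ext_iff] at h
      exact hone (by simpa using h.1)
  · -- proper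
    intro h
    have : ((1 : ZMod (2*m)), (0 : ZMod (2*n))) ∈
        {p : ZMod (2*m) × ZMod (2*n) | π₁ p.1 = 0 ∧ π₂ p.2 = 0} := h ▸ Set.mem_univ _
    simp only [Set.mem_setOf_eq, map_one] at this
    exact absurd this.1 (by decide)
  · -- independent
    intro a ha b hb hadj
    rw [tor_adj_iff hN hM] at hadj
    obtain ⟨d, hd, rfl⟩ := hadj
    obtain ⟨ha1, ha2⟩ := ha
    obtain ⟨hb1, hb2⟩ := hb
    simp only [Prod.fst_add, Prod.snd_add, map_add, map_intCast, map_one, map_zero,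
      map_neg, ha1, ha2, zero_add] at hb1 hb2
    simp only [triDirs, Set.mem_insert_iff, Set.mem_singleton_iff] at hd
    rcases hd with rfl|rfl|rfl|rfl|rfl|rfl <;>
      simp only [Int.cast_one, Int.cast_zero, Int.cast_neg] at hb1 hb2 <;>
      first
        | (exact absurd hb1 (by decide))
        | (exact absurd hb2 (by decide))
end
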